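/- arXiv:2003.08347 — 6 statements merged into one kernel-verified Lean document; each statement's English description precedes it below -/
import Mathlib

section
/- Let (π, H) be a square-integrable σ-representation of a countable discrete group Γ on a separable complex Hilbert space H, and let g ∈ H be arbitrary. Then the coefficient operator C_{g,Γ}, defined on the domain dom(C_{g,Γ}) = {f ∈ H : (⟨f, π(γ)g⟩)_{γ∈Γ} ∈ ℓ²(Γ)} by C_{g,Γ}f = (⟨f, π(γ)g⟩)_{γ∈Γ}, is densely defined (dom(C_{g,Γ}) is dense in H) and closed (its graph {(f, C_{g,Γ}f) : f ∈ dom(C_{g,Γ})} is closed in H × ℓ²(Γ)). -/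
open MeasureTheory
open scoped ENNReal ComplexInnerProductSpace

noncomputable section

section Defs

variable {Γ : Type*} [Group Γ] {H : Type*} [NormedAddCommGroup H] [InnerProductSpace ℂ H]

/-- A projective unitary `σ`-representation: `|σ| = 1`, cocycle identity, normalization,
`π 1 = I`, and `π x π y = σ(x,y) π(xy)`. -/
def IsProjectiveRep (σ : Γ → Γ → ℂ) (π : Γ → H ≃ₗᵢ[ℂ] H) : Prop :=
  (∀ x y : Γ, ‖σ x y‖ = 1) ∧
  (∀ x y z : Γ, σ x (y * z) * σ y z = σ (x * y) z * σ x y) ∧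
  (∀ x : Γ, σ x 1 = 1 ∧ σ 1 x = 1) ∧
  π 1 = LinearIsometryEquiv.refl ℂ H ∧
  ∀ x y : Γ, ∀ f : H, π x (π y f) = σ x y • π (x * y) f

/-- `g` is a Bessel vector for the family `(π γ g)_γ`. -/
def IsBesselVector (π : Γ → H ≃ₗᵢ[ℂ] H) (g : H) : Prop :=
  ∃ B : ℝ, 0 < B ∧ ∀ f : H,
    (Summable fun γ : Γ => ‖⟪f, π γ g⟫‖ ^ 2) ∧
      (∑' γ : Γ, ‖⟪f, π γ g⟫‖ ^ 2) ≤ B * ‖f‖ ^ 2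

/-- Square-integrability: square-summable matrix coefficients on a dense subspace. -/
def IsSquareIntegrableRep (π : Γ → H ≃ₗᵢ[ℂ] H) : Prop :=
  ∃ D : Submodule ℂ H, Dense (D : Set H) ∧
    ∀ f : H, ∀ g ∈ D, Summable fun γ : Γ => ‖⟪f, π γ g⟫‖ ^ 2

/-- The commutant `π(Γ)'`. -/
def RepCommutant (π : Γ → H ≃ₗᵢ[ℂ] H) : Set (H →L[ℂ] H) :=
  {T | ∀ (γ : Γ) (f : H), T (π γ f) = π γ (T f)}

/-- The double commutant `π(Γ)''`. -/
def RepBicommutant (π : Γ → H ≃ₗᵢ[ℂ] H) : Set (H →L[ℂ] H) :=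
  {T | ∀ S ∈ RepCommutant π, ∀ f : H, T (S f) = S (T f)}

/-- `h` is separating for `π(Γ)''`. -/
def IsSeparatingVector (π : Γ → H ≃ₗᵢ[ℂ] H) (h : H) : Prop :=
  ∀ T ∈ RepBicommutant π, T h = 0 → T = 0

/-- `(π γ g)_γ` is a Parseval frame for `H`. -/
def IsParsevalFrame (π : Γ → H ≃ₗᵢ[ℂ] H) (g : H) : Prop :=
  ∀ f : H, HasSum (fun γ : Γ => ‖⟪f, π γ g⟫‖ ^ 2) (‖f‖ ^ 2)

/-- `(π γ g)_γ` is a frame for `H`. -/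
def IsFrame (π : Γ → H ≃ₗᵢ[ℂ] H) (g : H) : Prop :=
  ∃ A B : ℝ, 0 < A ∧ 0 < B ∧ ∀ f : H,
    (Summable fun γ : Γ => ‖⟪f, π γ g⟫‖ ^ 2) ∧
      A * ‖f‖ ^ 2 ≤ (∑' γ : Γ, ‖⟪f, π γ g⟫‖ ^ 2) ∧
      (∑' γ : Γ, ‖⟪f, π γ g⟫‖ ^ 2) ≤ B * ‖f‖ ^ 2

/-- `(π γ g)_γ` is a Riesz sequence. -/
def IsRieszSequence (π : Γ → H ≃ₗᵢ[ℂ] H) (g : H) : Prop :=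
  ∃ A B : ℝ, 0 < A ∧ 0 < B ∧ ∀ (s : Finset Γ) (c : Γ → ℂ),
    A * ∑ γ ∈ s, ‖c γ‖ ^ 2 ≤ ‖∑ γ ∈ s, c γ • π γ g‖ ^ 2 ∧
      ‖∑ γ ∈ s, c γ • π γ g‖ ^ 2 ≤ B * ∑ γ ∈ s, ‖c γ‖ ^ 2

/-- `g` is cyclic: the orbit `π(Γ)g` has dense linear span. -/
def IsCyclicVector (π : Γ → H ≃ₗᵢ[ℂ] H) (g : H) : Prop :=
  Dense ((Submodule.span ℂ (Set.range fun γ : Γ => π γ g) : Submodule ℂ H) : Set H)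

/-- `γ₀` is `σ`-regular. -/
def IsSigmaRegular (σ : Γ → Γ → ℂ) (γ₀ : Γ) : Prop :=
  ∀ γ : Γ, γ * γ₀ = γ₀ * γ → σ γ₀ γ = σ γ γ₀

/-- Kleppner's condition for `(Γ, σ)`. -/
def KleppnerCondition (σ : Γ → Γ → ℂ) : Prop :=
  ∀ γ₀ : Γ, γ₀ ≠ 1 → IsSigmaRegular σ γ₀ →
    {x : Γ | ∃ γ : Γ, γ * γ₀ * γ⁻¹ = x}.Infinite

end Defs

set_option maxHeartbeats 2000000

theorem stmt_2
    {Γ : Type*} [Group Γ] [Countable Γ]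
    {H : Type*} [NormedAddCommGroup H] [InnerProductSpace ℂ H] [CompleteSpace H]
    [TopologicalSpace.SeparableSpace H]
    (σ : Γ → Γ → ℂ) (π : Γ → H ≃ₗᵢ[ℂ] H)
    (hrep : IsProjectiveRep σ π)
    (hsq : IsSquareIntegrableRep π)
    (g : H) :
    Dense {f : H | Memℓp (fun γ : Γ => ⟪f, π γ g⟫) 2} ∧
    IsClosed {p : H × lp (fun _ : Γ => ℂ) 2 | ∀ γ : Γ, p.2 γ = ⟪p.1, π γ g⟫} := by
  constructor
  · -- density
    obtain ⟨D, hD, hDsq⟩ := hsq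
    refine hD.mono ?_
    rintro f hf
    have hsum : Summable fun γ : Γ => ‖⟪g, π γ f⟫‖ ^ 2 := hDsq g f hf
    have hsum' : Summable fun γ : Γ => ‖⟪g, π γ⁻¹ f⟫‖ ^ 2 :=
      (Equiv.inv Γ).summable_iff.mpr hsum
    have key : ∀ γ : Γ, ‖⟪f, π γ g⟫‖ = ‖⟪g, π γ⁻¹ f⟫‖ := by
      intro γ
      have h1 : ⟪f, π γ g⟫ = ⟪(π γ).symm f, g⟫ := by
        conv_lhs => rw [← (π γ).apply_symm_apply f]
        rw [(π γ).inner_map_map]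
      have h2 : π γ (π γ⁻¹ f) = σ γ γ⁻¹ • f := by
        rw [hrep.2.2.2.2 γ γ⁻¹ f, mul_inv_cancel, hrep.2.2.2.1]; rfl
      have h3 : (π γ).symm f = (σ γ γ⁻¹)⁻¹ • π γ⁻¹ f := by
        have hσ : σ γ γ⁻¹ ≠ 0 := by
          intro h0
          have := hrep.1 γ γ⁻¹
          rw [h0, norm_zero] at this; norm_num at this
        rw [eq_comm, inv_smul_eq_iff₀ hσ, ← (π γ).injective.eq_iff, h2,
          LinearIsometryEquiv.map_smul, (π γ).apply_symm_apply]
      rw [h1, h3, inner_smul_left, norm_mul, RCLike.norm_conj, norm_inv, hrep.1 γ γ⁻¹,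
        inv_one, one_mul, ← norm_inner_symm]
    have hsum'' : Summable fun γ : Γ => ‖⟪f, π γ g⟫‖ ^ 2 := by
      refine hsum'.congr fun γ => ?_
      rw [key γ]
    have : Memℓp (fun γ : Γ => ⟪f, π γ g⟫) 2 := by
      apply memℓp_gen
      have : (2 : ℝ≥0∞).toReal = ((2 : ℕ) : ℝ) := by norm_num
      rw [this]
      refine hsum''.congr fun γ => ?_
      rw [Real.rpow_natCast]
    exact this
  · -- closedness
    have : {p : H × lp (fun _ : Γ => ℂ) 2 | ∀ γ : Γ, p.2 γ = ⟪p.1, π γ g⟫} =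
        ⋂ γ : Γ, {p : H × lp (fun _ : Γ => ℂ) 2 | p.2 γ = ⟪p.1, π γ g⟫} := by
      ext p; simp [Set.mem_iInter]
    rw [this]
    refine isClosed_iInter fun γ => ?_
    have heval : Continuous fun q : lp (fun _ : Γ => ℂ) 2 => q γ := by
      refine (LipschitzWith.of_dist_le_mul (K := 1) fun q q' => ?_).continuous
      rw [NNReal.coe_one, one_mul, dist_eq_norm, dist_eq_norm]
      have : q γ - q' γ = (q - q') γ := by rw [lp.coeFn_sub]; rfl
      rw [this]
      exact lp.norm_apply_le_norm (by norm_num) _ γ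
    have hc1 : Continuous fun p : H × lp (fun _ : Γ => ℂ) 2 => p.2 γ :=
      heval.comp continuous_snd
    have hc2 : Continuous fun p : H × lp (fun _ : Γ => ℂ) 2 => (⟪p.1, π γ g⟫ : ℂ) :=
      (continuous_inner.comp (continuous_fst.prodMk continuous_const))
    exact isClosed_eq hc1 hc2
end
end

section
/- Let (π, H) be a square-integrable σ-representation of a countable discrete group Γ on a separable complex Hilbert space H, and let g ∈ H be arbitrary. Define the reconstruction operator D_{g,Γ} on the domain dom(D_{g,Γ}) = {c ∈ ℓ²(Γ) : there exists f ∈ H with Σ_{γ∈Γ} c_γ⟨π(γ)g, h⟩ = ⟨f, h⟩ for all Bessel vectors h} by D_{g,Γ}c = f (this f is unique since the Bessel vectors are dense). Then D_{g,Γ} is densely defined (its domain contains all finitely supported sequences, hence is dense in ℓ²(Γ)) and closed (its graph is closed in ℓ²(Γ) × H). -/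
open MeasureTheory
open scoped ENNReal ComplexInnerProductSpace

noncomputable section

section Aux

variable {Γ : Type*} [Group Γ] {H : Type*} [NormedAddCommGroup H] [InnerProductSpace ℂ H]

lemma norm_inner_rep_eq (σ : Γ → Γ → ℂ) (π : Γ → H ≃ₗᵢ[ℂ] H)
    (hrep : IsProjectiveRep σ π) (g h : H) (γ : Γ) :
    ‖⟪π γ g, h⟫‖ = ‖⟪g, π γ⁻¹ h⟫‖ := by
  obtain ⟨hσnorm, hcoc, hσ1, hπ1, hmul⟩ := hrep
  have hσne : σ γ γ⁻¹ ≠ 0 := by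
    intro h0
    have := hσnorm γ γ⁻¹
    rw [h0] at this; simp at this
  have e1 : π γ (π γ⁻¹ h) = σ γ γ⁻¹ • h := by
    rw [hmul]; simp [hπ1]
  have e2 : h = (σ γ γ⁻¹)⁻¹ • π γ (π γ⁻¹ h) := by
    rw [e1, smul_smul, inv_mul_cancel₀ hσne, one_smul]
  calc ‖⟪π γ g, h⟫‖ = ‖⟪π γ g, (σ γ γ⁻¹)⁻¹ • π γ (π γ⁻¹ h)⟫‖ := by rw [← e2]
    _ = ‖(σ γ γ⁻¹)⁻¹‖ * ‖⟪π γ g, π γ (π γ⁻¹ h)⟫‖ := by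
        rw [inner_smul_right]; exact norm_mul _ _
    _ = ‖⟪g, π γ⁻¹ h⟫‖ := by
        rw [(π γ).inner_map_map, norm_inv, hσnorm, inv_one, one_mul]

lemma summable_inner_rep (σ : Γ → Γ → ℂ) (π : Γ → H ≃ₗᵢ[ℂ] H)
    (hrep : IsProjectiveRep σ π) (g h : H) (hb : IsBesselVector π h) :
    Summable fun γ : Γ => ‖⟪π γ g, h⟫‖ ^ 2 := by
  obtain ⟨B, hB, hh⟩ := hb
  have h1 : Summable fun γ : Γ => ‖⟪g, π γ h⟫‖ ^ 2 := (hh g).1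
  have h2 := ((Equiv.inv Γ).summable_iff
    (f := fun γ : Γ => ‖⟪g, π γ h⟫‖ ^ 2)).mpr h1
  refine h2.congr fun γ => ?_
  simp only [Function.comp_apply, Equiv.inv_apply]
  rw [norm_inner_rep_eq σ π hrep g h γ]

end Aux

theorem stmt_3
    {Γ : Type*} [Group Γ] [Countable Γ]
    {H : Type*} [NormedAddCommGroup H] [InnerProductSpace ℂ H] [CompleteSpace H]
    [TopologicalSpace.SeparableSpace H]
    (σ : Γ → Γ → ℂ) (π : Γ → H ≃ₗᵢ[ℂ] H)
    (hrep : IsProjectiveRep σ π)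
    (hsq : IsSquareIntegrableRep π)
    (g : H) :
    (∀ c : lp (fun _ : Γ => ℂ) 2, {γ : Γ | c γ ≠ 0}.Finite →
      ∃ f : H, ∀ h : H, IsBesselVector π h →
        HasSum (fun γ : Γ => c γ * ⟪π γ g, h⟫) ⟪f, h⟫) ∧
    Dense {c : lp (fun _ : Γ => ℂ) 2 | ∃ f : H, ∀ h : H, IsBesselVector π h →
      HasSum (fun γ : Γ => c γ * ⟪π γ g, h⟫) ⟪f, h⟫} ∧
    IsClosed {p : lp (fun _ : Γ => ℂ) 2 × H | ∀ h : H, IsBesselVector π h →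
      HasSum (fun γ : Γ => p.1 γ * ⟪π γ g, h⟫) ⟪p.2, h⟫} := by
  classical
  -- Part 1: finitely supported sequences are in the domain
  have key : ∀ c : lp (fun _ : Γ => ℂ) 2, {γ : Γ | c γ ≠ 0}.Finite →
      ∃ f : H, ∀ h : H, IsBesselVector π h →
        HasSum (fun γ : Γ => c γ * ⟪π γ g, h⟫) ⟪f, h⟫ := by
    intro c hc
    refine ⟨∑ γ ∈ hc.toFinset, (starRingEnd ℂ) (c γ) • π γ g, fun h _ => ?_⟩
    have h1 : HasSum (fun γ : Γ => c γ * ⟪π γ g, h⟫)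
        (∑ γ ∈ hc.toFinset, c γ * ⟪π γ g, h⟫) := by
      apply hasSum_sum_of_ne_finset_zero
      intro γ hγ
      simp only [Set.Finite.mem_toFinset, Set.mem_setOf_eq, not_not] at hγ
      simp [hγ]
    convert h1 using 1
    rw [sum_inner]
    refine Finset.sum_congr rfl fun γ _ => ?_
    rw [inner_smul_left]
    simp
  refine ⟨key, ?_, ?_⟩
  · -- Density
    rw [dense_iff_closure_eq, Set.eq_univ_iff_forall]
    intro c
    have hsum : HasSum (fun γ : Γ => lp.single 2 γ (c γ)) c :=
      lp.hasSum_single (by norm_num) c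
    refine mem_closure_of_tendsto hsum (Filter.Eventually.of_forall fun s => ?_)
    apply key
    apply Set.Finite.subset (Set.finite_coe_iff.mp (Finite.of_fintype (s : Set Γ)))
    intro γ hγ
    simp only [Set.mem_setOf_eq] at hγ
    by_contra hγs
    apply hγ
    have : ((∑ i ∈ s, lp.single 2 i (c i) : lp (fun _ : Γ => ℂ) 2) : ∀ _ : Γ, ℂ) γ
        = ∑ i ∈ s, (lp.single 2 i (c i) : ∀ _ : Γ, ℂ) γ := by
      rw [lp.coeFn_sum]; simp
    rw [this]
    refine Finset.sum_eq_zero fun i hi => ?_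
    rw [lp.single_apply]
    have : γ ≠ i := fun hgi => hγs (hgi ▸ hi)
    simp [Pi.single_apply, this]
  · -- Closedness
    have hset : {p : lp (fun _ : Γ => ℂ) 2 × H | ∀ h : H, IsBesselVector π h →
        HasSum (fun γ : Γ => p.1 γ * ⟪π γ g, h⟫) ⟪p.2, h⟫}
        = ⋂ h : H, {p : lp (fun _ : Γ => ℂ) 2 × H | IsBesselVector π h →
          HasSum (fun γ : Γ => p.1 γ * ⟪π γ g, h⟫) ⟪p.2, h⟫} := by
      ext p; simp [Set.mem_iInter]
    rw [hset]
    refine isClosed_iInter fun h => ?_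
    by_cases hb : IsBesselVector π h
    · -- the Bessel coefficient vector as an element of ℓ²
      have hmem : Memℓp (fun γ : Γ => (starRingEnd ℂ) ⟪π γ g, h⟫) 2 := by
        apply memℓp_gen
        have hs := summable_inner_rep σ π hrep g h hb
        refine hs.congr fun γ => ?_
        rw [ENNReal.toReal_ofNat, RCLike.norm_conj,
          show ((2 : ℝ)) = ((2 : ℕ) : ℝ) by norm_num,
          Real.rpow_natCast]
      set v : lp (fun _ : Γ => ℂ) 2 := ⟨_, hmem⟩ with hv
      have hinner : ∀ c : lp (fun _ : Γ => ℂ) 2,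
          HasSum (fun γ : Γ => c γ * ⟪π γ g, h⟫) ⟪v, c⟫ := by
        intro c
        have := lp.hasSum_inner (𝕜 := ℂ) v c
        refine this.congr_fun fun γ => ?_
        simp only [hv]
        rw [RCLike.inner_apply]
        simp [mul_comm]
      have heq : {p : lp (fun _ : Γ => ℂ) 2 × H | IsBesselVector π h →
          HasSum (fun γ : Γ => p.1 γ * ⟪π γ g, h⟫) ⟪p.2, h⟫}
          = {p : lp (fun _ : Γ => ℂ) 2 × H | ⟪v, p.1⟫ = ⟪p.2, h⟫} := by
        ext p
        simp only [Set.mem_setOf_eq]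
        constructor
        · intro hp
          exact ((hinner p.1).unique (hp hb))
        · intro hp _
          rw [← hp]
          exact hinner p.1
      rw [heq]
      exact isClosed_eq
        ((continuous_const.inner (continuous_fst)))
        ((continuous_snd.inner continuous_const))
    · have : {p : lp (fun _ : Γ => ℂ) 2 × H | IsBesselVector π h →
          HasSum (fun γ : Γ => p.1 γ * ⟪π γ g, h⟫) ⟪p.2, h⟫} = Set.univ := by
        ext p; simp [hb]
      rw [this]
      exact isClosed_univ
end
end

section
/- Let (π, H) be a square-integrable σ-representation of a countable discrete group Γ on a separable complex Hilbert space H and let c ∈ ℓ²(Γ). For γ ∈ Γ define the sequence ϑ^σ(γ)c by (ϑ^σ(γ)c)_{γ'} = conj(σ(γ⁻¹, γ'))·σ(γ⁻¹γ'γ, γ⁻¹)·c_{γ⁻¹γ'γ}; then ϑ^σ(γ)c ∈ ℓ²(Γ), and for every γ ∈ Γ and every Bessel vector g ∈ H (noting that π(γ)*g is again a Bessel vector) one has π(γ)(π(c)(π(γ)*g)) = π(ϑ^σ(γ)c)g, i.e., the operator identity π(γ)π(c)π(γ)* = π(ϑ^σ(γ)c) holds on the Bessel vectors. -/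
open MeasureTheory
open scoped ENNReal ComplexInnerProductSpace

noncomputable section

section Aux

variable {Γ : Type*} [Group Γ]

/-- Key cocycle identity used for conjugating `ℓ²` coefficients. -/
lemma cocycle_conj_identity (σ : Γ → Γ → ℂ)
    (hσ1 : ∀ x y : Γ, ‖σ x y‖ = 1)
    (hco : ∀ x y z : Γ, σ x (y * z) * σ y z = σ (x * y) z * σ x y)
    (hn : ∀ x : Γ, σ x 1 = 1 ∧ σ 1 x = 1) (γ γ' : Γ) :
    σ γ γ' * σ γ⁻¹ (γ * γ' * γ⁻¹) = σ (γ * γ' * γ⁻¹) γ * σ γ' γ⁻¹ := by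
  have hne : ∀ x y : Γ, σ x y ≠ 0 := by
    intro x y h
    have := hσ1 x y
    rw [h] at this; simp at this
  have hA := hco γ⁻¹ (γ * γ' * γ⁻¹) γ
  have e1 : γ * γ' * γ⁻¹ * γ = γ * γ' := by group
  have e2 : γ⁻¹ * (γ * γ' * γ⁻¹) = γ' * γ⁻¹ := by group
  rw [e1, e2] at hA
  have hB := hco γ⁻¹ γ γ'
  rw [inv_mul_cancel, (hn γ').2] at hB
  have hC := hco γ' γ⁻¹ γ
  rw [inv_mul_cancel, (hn γ').1] at hC
  have h1 : σ γ γ' * σ γ⁻¹ (γ * γ' * γ⁻¹) * σ (γ' * γ⁻¹) γ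
      = σ (γ * γ' * γ⁻¹) γ * σ γ' γ⁻¹ * σ (γ' * γ⁻¹) γ := by
    calc σ γ γ' * σ γ⁻¹ (γ * γ' * γ⁻¹) * σ (γ' * γ⁻¹) γ
        = σ γ γ' * (σ (γ' * γ⁻¹) γ * σ γ⁻¹ (γ * γ' * γ⁻¹)) := by ring
      _ = σ γ γ' * (σ γ⁻¹ (γ * γ') * σ (γ * γ' * γ⁻¹) γ) := by rw [hA]
      _ = (σ γ⁻¹ (γ * γ') * σ γ γ') * σ (γ * γ' * γ⁻¹) γ := by ring
      _ = (1 * σ γ⁻¹ γ) * σ (γ * γ' * γ⁻¹) γ := by rw [hB]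
      _ = (σ (γ' * γ⁻¹) γ * σ γ' γ⁻¹) * σ (γ * γ' * γ⁻¹) γ := by rw [← hC]
      _ = σ (γ * γ' * γ⁻¹) γ * σ γ' γ⁻¹ * σ (γ' * γ⁻¹) γ := by ring
  exact mul_right_cancel₀ (hne _ _) h1

end Aux

theorem stmt_4
    {Γ : Type*} [Group Γ] [Countable Γ]
    {H : Type*} [NormedAddCommGroup H] [InnerProductSpace ℂ H] [CompleteSpace H]
    [TopologicalSpace.SeparableSpace H]
    (σ : Γ → Γ → ℂ) (π : Γ → H ≃ₗᵢ[ℂ] H)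
    (hrep : IsProjectiveRep σ π)
    (hsq : IsSquareIntegrableRep π)
    (c : Γ → ℂ) (hc : Memℓp c 2) (γ : Γ) :
    Memℓp (fun γ' : Γ =>
      (starRingEnd ℂ) (σ γ⁻¹ γ') * σ (γ⁻¹ * γ' * γ) γ⁻¹ * c (γ⁻¹ * γ' * γ)) 2 ∧
    ∀ g : H, IsBesselVector π g → ∀ v : H,
      HasSum (fun γ' : Γ => c γ' • π γ' ((π γ).symm g)) v →
      HasSum (fun γ' : Γ =>
        ((starRingEnd ℂ) (σ γ⁻¹ γ') * σ (γ⁻¹ * γ' * γ) γ⁻¹ * c (γ⁻¹ * γ' * γ)) • π γ' g)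
        (π γ v) := by
  obtain ⟨hσ1, hco, hn, hπ1, hmul⟩ := hrep
  have hne : ∀ x y : Γ, σ x y ≠ 0 := by
    intro x y h
    have := hσ1 x y
    rw [h] at this; simp at this
  have hp2 : (0:ℝ) < (2 : ℝ≥0∞).toReal := by norm_num
  have hnorm : ∀ γ' : Γ,
      ‖(starRingEnd ℂ) (σ γ⁻¹ γ') * σ (γ⁻¹ * γ' * γ) γ⁻¹ * c (γ⁻¹ * γ' * γ)‖
        = ‖c (γ⁻¹ * γ' * γ)‖ := by
    intro γ'
    rw [norm_mul, norm_mul, RCLike.norm_conj, hσ1, hσ1, one_mul, one_mul]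
  -- the conjugation equivalence
  let e : Γ ≃ Γ :=
    { toFun := fun x => γ * x * γ⁻¹
      invFun := fun x => γ⁻¹ * x * γ
      left_inv := fun x => by group
      right_inv := fun x => by group }
  constructor
  · apply memℓp_gen
    have hcs : Summable fun γ' : Γ => ‖c γ'‖ ^ (2 : ℝ≥0∞).toReal :=
      (memℓp_gen_iff hp2).mp hc
    have hs2 := e.symm.summable_iff
      (f := fun γ' : Γ => ‖c γ'‖ ^ (2 : ℝ≥0∞).toReal) |>.mpr hcs
    refine hs2.congr fun γ' => ?_
    show ‖c (γ⁻¹ * γ' * γ)‖ ^ (2 : ℝ≥0∞).toReal = _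
    rw [hnorm]
  · intro g _hg v hv
    have hsum : HasSum (fun γ' : Γ => π γ (c γ' • π γ' ((π γ).symm g))) (π γ v) :=
      ((π γ).toLinearIsometry.toContinuousLinearMap).hasSum hv
    have hterm : ∀ γ' : Γ, π γ (c γ' • π γ' ((π γ).symm g)) =
        ((starRingEnd ℂ) (σ γ⁻¹ (γ * γ' * γ⁻¹)) * σ (γ⁻¹ * (γ * γ' * γ⁻¹) * γ) γ⁻¹ *
          c (γ⁻¹ * (γ * γ' * γ⁻¹) * γ)) • π (γ * γ' * γ⁻¹) g := by
      intro γ'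
      have e3 : γ⁻¹ * (γ * γ' * γ⁻¹) * γ = γ' := by group
      rw [e3]
      have h4 := hmul (γ * γ' * γ⁻¹) γ ((π γ).symm g)
      rw [(π γ).apply_symm_apply] at h4
      have e1 : γ * γ' * γ⁻¹ * γ = γ * γ' := by group
      rw [e1] at h4
      -- h4 : π (γ*γ'*γ⁻¹) g = σ (γ*γ'*γ⁻¹) γ • π (γ*γ') ((π γ).symm g)
      have h5 : π (γ * γ') ((π γ).symm g)
          = (σ (γ * γ' * γ⁻¹) γ)⁻¹ • π (γ * γ' * γ⁻¹) g := by
        rw [h4, smul_smul, inv_mul_cancel₀ (hne _ _), one_smul]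
      rw [(π γ).map_smul, hmul γ γ', h5, smul_smul, smul_smul]
      congr 1
      rw [← Complex.inv_eq_conj (hσ1 _ _)]
      have key := cocycle_conj_identity σ hσ1 hco hn γ γ'
      have k2 : σ γ γ' / σ (γ * γ' * γ⁻¹) γ = σ γ' γ⁻¹ / σ γ⁻¹ (γ * γ' * γ⁻¹) := by
        rw [div_eq_div_iff (hne _ _) (hne _ _)]
        linear_combination key
      calc c γ' * σ γ γ' * (σ (γ * γ' * γ⁻¹) γ)⁻¹
          = c γ' * (σ γ γ' / σ (γ * γ' * γ⁻¹) γ) := by ring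
        _ = c γ' * (σ γ' γ⁻¹ / σ γ⁻¹ (γ * γ' * γ⁻¹)) := by rw [k2]
        _ = (σ γ⁻¹ (γ * γ' * γ⁻¹))⁻¹ * σ γ' γ⁻¹ * c γ' := by ring
    have hfe : (fun γ' : Γ => π γ (c γ' • π γ' ((π γ).symm g)))
        = (fun γ'' : Γ =>
            ((starRingEnd ℂ) (σ γ⁻¹ γ'') * σ (γ⁻¹ * γ'' * γ) γ⁻¹ * c (γ⁻¹ * γ'' * γ)) •
              π γ'' g) ∘ e := funext fun γ' => hterm γ'
    rw [hfe] at hsum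
    exact e.hasSum_iff.mp hsum
end
end

section
/- Let (π, H) be a square-integrable σ-representation of a countable discrete group Γ on a separable complex Hilbert space H, and suppose (Γ, σ) satisfies Kleppner's condition. If g ∈ H is such that π(Γ)g is a Riesz sequence in H, then g is a separating vector for π(Γ)'': every T ∈ π(Γ)'' with Tg = 0 satisfies T = 0. -/
open MeasureTheory
open scoped ENNReal ComplexInnerProductSpace

noncomputable section

set_option linter.unusedSectionVars false

section AuxProof

variable {ι : Type*}

private lemma rpow_two_eq (t : ℝ) : t ^ ((2 : ℝ≥0∞)).toReal = t ^ (2 : ℕ) := by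
  rw [show ((2 : ℝ≥0∞)).toReal = ((2 : ℕ) : ℝ) by simp, Real.rpow_natCast]

private lemma conj_inv_eq {z : ℂ} (hz : ‖z‖ = 1) : starRingEnd ℂ z⁻¹ = z := by
  have hz0 : z ≠ 0 := by intro h; simp [h] at hz
  have h1 : starRingEnd ℂ z * z = 1 := by
    rw [mul_comm, Complex.mul_conj, Complex.normSq_eq_norm_sq, hz]
    norm_num
  rw [map_inv₀, inv_eq_iff_eq_inv, eq_comm, inv_eq_of_mul_eq_one_left h1]

variable {H : Type*} [NormedAddCommGroup H] [InnerProductSpace ℂ H] [CompleteSpace H]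

private lemma lp_eval_cont (γ : ι) :
    Continuous fun c : lp (fun _ : ι => ℂ) 2 => c γ := by
  refine (LipschitzWith.of_dist_le_mul (K := 1) fun a b => ?_).continuous
  have h1 : a γ - b γ = (a - b : lp (fun _ : ι => ℂ) 2) γ := by
    rw [lp.coeFn_sub]; rfl
  rw [dist_eq_norm, dist_eq_norm, h1, NNReal.coe_one, one_mul]
  exact lp.norm_apply_le_norm (by norm_num) _ γ

private lemma analysis_exists (v : ι → H)
    (hsum : ∀ f : H, Summable fun γ : ι => ‖(⟪v γ, f⟫ : ℂ)‖ ^ 2) :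
    ∃ V : H →L[ℂ] lp (fun _ : ι => ℂ) 2,
      ∀ f : H, ∀ γ : ι, (V f : ∀ _ : ι, ℂ) γ = ⟪v γ, f⟫ := by
  have mem : ∀ f : H, Memℓp (fun γ : ι => (⟪v γ, f⟫ : ℂ)) 2 := fun f =>
    memℓp_gen (by simpa only [rpow_two_eq] using hsum f)
  let V₀ : H →ₗ[ℂ] lp (fun _ : ι => ℂ) 2 :=
    { toFun := fun f => ⟨fun γ => ⟪v γ, f⟫, mem f⟩
      map_add' := fun f₁ f₂ => by
        apply lp.ext
        rw [lp.coeFn_add]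
        funext γ
        simp [inner_add_right]
      map_smul' := fun c f => by
        apply lp.ext
        rw [lp.coeFn_smul]
        funext γ
        simp [inner_smul_right] }
  have hgraph : IsClosed (V₀.graph : Set (H × lp (fun _ : ι => ℂ) 2)) := by
    have hset : (V₀.graph : Set (H × lp (fun _ : ι => ℂ) 2)) =
        ⋂ γ : ι, {p : H × lp (fun _ : ι => ℂ) 2 |
          (p.2 : ∀ _ : ι, ℂ) γ = ⟪v γ, p.1⟫} := by
      ext p
      simp only [Set.mem_iInter, SetLike.mem_coe, LinearMap.mem_graph_iff, Set.mem_setOf_eq]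
      constructor
      · intro hp γ; rw [hp]; rfl
      · intro hp
        apply lp.ext
        funext γ
        exact hp γ
    rw [hset]
    refine isClosed_iInter fun γ => isClosed_eq ?_ ?_
    · exact (lp_eval_cont γ).comp continuous_snd
    · exact (innerSL ℂ (v γ)).continuous.comp continuous_fst
  exact ⟨{ toLinearMap := V₀, cont := V₀.continuous_of_isClosed_graph hgraph }, fun f γ => rfl⟩

private lemma lp_hasSum_norm_sq (c : lp (fun _ : ι => ℂ) 2) :
    HasSum (fun γ : ι => ‖c γ‖ ^ 2) (‖c‖ ^ 2) := by
  have hs : Summable fun γ : ι => ‖c γ‖ ^ ((2:ℝ≥0∞)).toReal :=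
    (lp.memℓp c).summable (by norm_num)
  have ht : ‖c‖ ^ ((2:ℝ≥0∞)).toReal = ∑' γ : ι, ‖c γ‖ ^ ((2:ℝ≥0∞)).toReal :=
    lp.norm_rpow_eq_tsum (by norm_num) c
  have hs' : Summable fun γ : ι => ‖c γ‖ ^ (2:ℕ) := by simpa only [rpow_two_eq] using hs
  have h2 : (∑' γ : ι, ‖c γ‖ ^ (2:ℕ)) = ‖c‖ ^ (2:ℕ) := by
    rw [← rpow_two_eq ‖c‖, ht]
    exact tsum_congr fun γ => (rpow_two_eq _).symm
  exact h2 ▸ hs'.hasSum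

private lemma twist_exists (e : ι ≃ ι) (w : ι → ℂ) (hw : ∀ γ, ‖w γ‖ = 1) :
    ∃ Λ : lp (fun _ : ι => ℂ) 2 →L[ℂ] lp (fun _ : ι => ℂ) 2,
      ∀ c : lp (fun _ : ι => ℂ) 2, ∀ γ : ι, (Λ c : ∀ _ : ι, ℂ) γ = w γ * c (e γ) := by
  have mem : ∀ c : lp (fun _ : ι => ℂ) 2, Memℓp (fun γ : ι => w γ * c (e γ)) 2 := by
    intro c
    apply memℓp_gen
    have hs : Summable fun γ : ι => ‖c (e γ)‖ ^ ((2:ℝ≥0∞)).toReal :=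
      (Equiv.summable_iff e).2 ((lp.memℓp c).summable (by norm_num))
    refine hs.congr fun γ => ?_
    rw [norm_mul, hw, one_mul]
  have hnorm : ∀ c : lp (fun _ : ι => ℂ) 2, ‖(⟨fun γ => w γ * c (e γ), mem c⟩ :
      lp (fun _ : ι => ℂ) 2)‖ = ‖c‖ := by
    intro c
    have h1 : ‖(⟨fun γ => w γ * c (e γ), mem c⟩ : lp (fun _ : ι => ℂ) 2)‖ ^ ((2:ℝ≥0∞)).toReal
        = ∑' γ : ι, ‖w γ * c (e γ)‖ ^ ((2:ℝ≥0∞)).toReal :=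
      lp.norm_rpow_eq_tsum (by norm_num) _
    have h2 : (∑' γ : ι, ‖w γ * c (e γ)‖ ^ ((2:ℝ≥0∞)).toReal)
        = ∑' γ : ι, ‖c γ‖ ^ ((2:ℝ≥0∞)).toReal := by
      rw [← Equiv.tsum_eq e (fun γ => ‖c γ‖ ^ ((2:ℝ≥0∞)).toReal)]
      exact tsum_congr fun γ => by rw [norm_mul, hw, one_mul]
    have h3 : ‖c‖ ^ ((2:ℝ≥0∞)).toReal = ∑' γ : ι, ‖c γ‖ ^ ((2:ℝ≥0∞)).toReal :=
      lp.norm_rpow_eq_tsum (by norm_num) c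
    have h4 := h1.trans (h2.trans h3.symm)
    rw [rpow_two_eq, rpow_two_eq] at h4
    calc ‖(⟨fun γ => w γ * c (e γ), mem c⟩ : lp (fun _ : ι => ℂ) 2)‖
        = Real.sqrt (‖(⟨fun γ => w γ * c (e γ), mem c⟩ : lp (fun _ : ι => ℂ) 2)‖ ^ (2:ℕ)) :=
          (Real.sqrt_sq (norm_nonneg _)).symm
      _ = Real.sqrt (‖c‖ ^ (2:ℕ)) := by rw [h4]
      _ = ‖c‖ := Real.sqrt_sq (norm_nonneg _)
  let Λ₀ : lp (fun _ : ι => ℂ) 2 →ₗ[ℂ] lp (fun _ : ι => ℂ) 2 :=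
    { toFun := fun c => ⟨fun γ => w γ * c (e γ), mem c⟩
      map_add' := fun c₁ c₂ => by
        apply lp.ext
        rw [lp.coeFn_add (⟨fun γ => w γ * c₁ (e γ), mem c₁⟩ : lp (fun _ : ι => ℂ) 2) _]
        funext γ
        have : ((c₁ + c₂ : lp (fun _ : ι => ℂ) 2) : ∀ _ : ι, ℂ) (e γ)
            = c₁ (e γ) + c₂ (e γ) := by rw [lp.coeFn_add]; rfl
        simp only [Pi.add_apply]
        show w γ * ((c₁ + c₂ : lp (fun _ : ι => ℂ) 2) : ∀ _ : ι, ℂ) (e γ) = _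
        rw [this]; ring
      map_smul' := fun a c => by
        apply lp.ext
        rw [lp.coeFn_smul _ (⟨fun γ => w γ * c (e γ), mem c⟩ : lp (fun _ : ι => ℂ) 2)]
        funext γ
        have : ((a • c : lp (fun _ : ι => ℂ) 2) : ∀ _ : ι, ℂ) (e γ)
            = a * c (e γ) := by rw [lp.coeFn_smul]; rfl
        simp only [Pi.smul_apply, smul_eq_mul, RingHom.id_apply]
        show w γ * ((a • c : lp (fun _ : ι => ℂ) 2) : ∀ _ : ι, ℂ) (e γ) = _
        rw [this]; ring }
  refine ⟨LinearMap.mkContinuous Λ₀ 1 (fun c => by rw [one_mul]; exact le_of_eq (hnorm c)),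
    fun c γ => rfl⟩

open ContinuousLinearMap in
private lemma adjoint_single [DecidableEq ι] (v : ι → H)
    (V : H →L[ℂ] lp (fun _ : ι => ℂ) 2)
    (hV : ∀ f : H, ∀ γ : ι, (V f : ∀ _ : ι, ℂ) γ = ⟪v γ, f⟫) (γ : ι) (a : ℂ) :
    ContinuousLinearMap.adjoint V (lp.single 2 γ a) = a • v γ := by
  refine ext_inner_right ℂ fun f => ?_
  rw [ContinuousLinearMap.adjoint_inner_left, lp.inner_single_left, hV, inner_smul_left]
  simp [RCLike.inner_apply]
  exact mul_comm _ _

open Filter in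
private lemma riesz_summable {Γ : Type*} [Group Γ] {π : Γ → H ≃ₗᵢ[ℂ] H} {g : H} {B : ℝ}
    (hB : 0 < B)
    (hupper : ∀ (s : Finset Γ) (c : Γ → ℂ),
      ‖∑ γ ∈ s, c γ • π γ g‖ ^ 2 ≤ B * ∑ γ ∈ s, ‖c γ‖ ^ 2)
    (f : H) : Summable fun γ : Γ => ‖(⟪π γ g, f⟫ : ℂ)‖ ^ 2 := by
  apply summable_of_sum_le (c := B * ‖f‖ ^ 2) (fun γ => sq_nonneg _)
  intro s
  set c : Γ → ℂ := fun γ => ⟪π γ g, f⟫ with hc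
  set t : ℝ := ∑ γ ∈ s, ‖c γ‖ ^ 2 with htdef
  have ht0 : (0:ℝ) ≤ t := Finset.sum_nonneg fun _ _ => sq_nonneg _
  set wv : H := ∑ γ ∈ s, c γ • π γ g with hw
  have hinner : (⟪f, wv⟫ : ℂ) = (t : ℂ) := by
    rw [hw, inner_sum, htdef]
    push_cast
    refine Finset.sum_congr rfl fun γ _ => ?_
    rw [inner_smul_right, ← inner_conj_symm f ((π γ) g)]
    rw [RCLike.mul_conj]
    norm_num
  have h1 : t ≤ ‖f‖ * ‖wv‖ := by
    calc t = ‖(⟪f, wv⟫ : ℂ)‖ := by rw [hinner]; simp [abs_of_nonneg ht0]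
    _ ≤ ‖f‖ * ‖wv‖ := norm_inner_le_norm f wv
  have h2 : ‖wv‖ ^ 2 ≤ B * t := hupper s c
  rcases eq_or_lt_of_le ht0 with h | h
  · rw [← h]; positivity
  · nlinarith [norm_nonneg f, norm_nonneg wv, sq_nonneg (‖f‖ * ‖wv‖)]

open Filter ContinuousLinearMap in
private lemma adjoint_lower {Γ : Type*} [Group Γ] {π : Γ → H ≃ₗᵢ[ℂ] H} {g : H} {A : ℝ}
    (hlow : ∀ (s : Finset Γ) (c : Γ → ℂ),
      A * ∑ γ ∈ s, ‖c γ‖ ^ 2 ≤ ‖∑ γ ∈ s, c γ • π γ g‖ ^ 2)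
    (V : H →L[ℂ] lp (fun _ : Γ => ℂ) 2)
    (hV : ∀ f : H, ∀ γ : Γ, (V f : ∀ _ : Γ, ℂ) γ = ⟪π γ g, f⟫)
    (c : lp (fun _ : Γ => ℂ) 2) :
    A * ‖c‖ ^ 2 ≤ ‖ContinuousLinearMap.adjoint V c‖ ^ 2 := by
  classical
  have h1 : HasSum (fun γ : Γ => lp.single 2 γ (c γ)) c := lp.hasSum_single (by norm_num) c
  have h2 : HasSum (fun γ : Γ => c γ • π γ g) (ContinuousLinearMap.adjoint V c) := by
    have := h1.mapL (ContinuousLinearMap.adjoint V)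
    simpa only [adjoint_single (fun γ => π γ g) V hV] using this
  have h3 : Tendsto (fun s : Finset Γ => ‖∑ γ ∈ s, c γ • π γ g‖ ^ 2) atTop
      (nhds (‖ContinuousLinearMap.adjoint V c‖ ^ 2)) :=
    ((continuous_norm.pow 2).tendsto _).comp h2
  have h4 : Tendsto (fun s : Finset Γ => A * ∑ γ ∈ s, ‖c γ‖ ^ 2) atTop
      (nhds (A * ‖c‖ ^ 2)) := (lp_hasSum_norm_sq c).const_mul A
  exact le_of_tendsto_of_tendsto' h4 h3 (fun s => hlow s c)

private lemma intertwine_left {Γ : Type*} [Group Γ] {σ : Γ → Γ → ℂ} {π : Γ → H ≃ₗᵢ[ℂ] H}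
    (hσnorm : ∀ x y : Γ, ‖σ x y‖ = 1)
    (hmul : ∀ x y : Γ, ∀ f : H, π x (π y f) = σ x y • π (x * y) f)
    (h0 : H) (W : H →L[ℂ] lp (fun _ : Γ => ℂ) 2)
    (hW : ∀ f : H, ∀ γ : Γ, (W f : ∀ _ : Γ, ℂ) γ = ⟪π γ h0, f⟫)
    (x : Γ) (Λ : lp (fun _ : Γ => ℂ) 2 →L[ℂ] lp (fun _ : Γ => ℂ) 2)
    (hΛ : ∀ c : lp (fun _ : Γ => ℂ) 2, ∀ γ : Γ,
      (Λ c : ∀ _ : Γ, ℂ) γ = σ x (x⁻¹ * γ) * c (x⁻¹ * γ))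
    (f : H) : W (π x f) = Λ (W f) := by
  apply lp.ext
  funext γ
  rw [hW, hΛ, hW]
  have hne : σ x (x⁻¹ * γ) ≠ 0 := fun h => by simpa [h] using hσnorm x (x⁻¹ * γ)
  have e1 : π x (π (x⁻¹ * γ) h0) = σ x (x⁻¹ * γ) • π γ h0 := by
    rw [hmul x (x⁻¹ * γ) h0, mul_inv_cancel_left]
  have e2 : π γ h0 = (σ x (x⁻¹ * γ))⁻¹ • π x (π (x⁻¹ * γ) h0) := by
    rw [e1, smul_smul, inv_mul_cancel₀ hne, one_smul]
  rw [e2, inner_smul_left, LinearIsometryEquiv.inner_map_map, conj_inv_eq (hσnorm _ _)]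

open ContinuousLinearMap in
private lemma intertwine_right {Γ : Type*} [Group Γ] {σ : Γ → Γ → ℂ} {π : Γ → H ≃ₗᵢ[ℂ] H}
    (hmul : ∀ x y : Γ, ∀ f : H, π x (π y f) = σ x y • π (x * y) f)
    (h0 : H) (W : H →L[ℂ] lp (fun _ : Γ => ℂ) 2)
    (hW : ∀ f : H, ∀ γ : Γ, (W f : ∀ _ : Γ, ℂ) γ = ⟪π γ h0, f⟫)
    (x : Γ) (Λ : lp (fun _ : Γ => ℂ) 2 →L[ℂ] lp (fun _ : Γ => ℂ) 2)
    (hΛ : ∀ c : lp (fun _ : Γ => ℂ) 2, ∀ γ : Γ,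
      (Λ c : ∀ _ : Γ, ℂ) γ = σ x (x⁻¹ * γ) * c (x⁻¹ * γ))
    (c : lp (fun _ : Γ => ℂ) 2) :
    ContinuousLinearMap.adjoint W (Λ c) = π x (ContinuousLinearMap.adjoint W c) := by
  refine ext_inner_right ℂ fun f => ?_
  have hR : (⟪π x (ContinuousLinearMap.adjoint W c), f⟫ : ℂ)
      = ⟪ContinuousLinearMap.adjoint W c, (π x).symm f⟫ := by
    conv_lhs => rw [show f = π x ((π x).symm f) from ((π x).apply_symm_apply f).symm]
    rw [LinearIsometryEquiv.inner_map_map]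
  rw [ContinuousLinearMap.adjoint_inner_left, hR, ContinuousLinearMap.adjoint_inner_left,
    lp.inner_eq_tsum, lp.inner_eq_tsum]
  rw [← Equiv.tsum_eq (Equiv.mulLeft x)
    (fun γ => (⟪(Λ c : ∀ _ : Γ, ℂ) γ, (W f : ∀ _ : Γ, ℂ) γ⟫ : ℂ))]
  refine tsum_congr fun γ => ?_
  have hterm : ((Equiv.mulLeft x) γ : Γ) = x * γ := rfl
  rw [hterm, hΛ, hW, hW]
  have hx : x⁻¹ * (x * γ) = γ := inv_mul_cancel_left x γ
  rw [hx]
  have hπ : (⟪π γ h0, (π x).symm f⟫ : ℂ) = starRingEnd ℂ (σ x γ) * ⟪π (x * γ) h0, f⟫ := by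
    have : (⟪π γ h0, (π x).symm f⟫ : ℂ) = ⟪π x (π γ h0), f⟫ := by
      conv_rhs => rw [show f = π x ((π x).symm f) from ((π x).apply_symm_apply f).symm]
      rw [LinearIsometryEquiv.inner_map_map]
    rw [this, hmul x γ h0, inner_smul_left]
  rw [RCLike.inner_apply, RCLike.inner_apply, hπ, map_mul]
  ring

open ContinuousLinearMap in
private theorem aux_main
    {Γ : Type*} [Group Γ] [Countable Γ]
    {H : Type*} [NormedAddCommGroup H] [InnerProductSpace ℂ H] [CompleteSpace H]
    [TopologicalSpace.SeparableSpace H]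
    (σ : Γ → Γ → ℂ) (π : Γ → H ≃ₗᵢ[ℂ] H)
    (hσnorm : ∀ x y : Γ, ‖σ x y‖ = 1)
    (hπone : π 1 = LinearIsometryEquiv.refl ℂ H)
    (hmul : ∀ x y : Γ, ∀ f : H, π x (π y f) = σ x y • π (x * y) f)
    (hsq : ∃ D : Submodule ℂ H, Dense (D : Set H) ∧
      ∀ f : H, ∀ g ∈ D, Summable fun γ : Γ => ‖(⟪f, π γ g⟫ : ℂ)‖ ^ 2)
    (g : H)
    (hg : ∃ A B : ℝ, 0 < A ∧ 0 < B ∧ ∀ (s : Finset Γ) (c : Γ → ℂ),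
      A * ∑ γ ∈ s, ‖c γ‖ ^ 2 ≤ ‖∑ γ ∈ s, c γ • π γ g‖ ^ 2 ∧
        ‖∑ γ ∈ s, c γ • π γ g‖ ^ 2 ≤ B * ∑ γ ∈ s, ‖c γ‖ ^ 2)
    (T : H →L[ℂ] H)
    (hT : ∀ S : H →L[ℂ] H, (∀ (γ : Γ) (f : H), S (π γ f) = π γ (S f)) →
      ∀ f : H, T (S f) = S (T f))
    (hTg : T g = 0) : T = 0 := by
  classical
  obtain ⟨A, B, hA, hB, hRiesz⟩ := hg
  obtain ⟨D, hD, hDsum⟩ := hsq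
  -- analysis operator for g
  have hgsum : ∀ f : H, Summable fun γ : Γ => ‖(⟪π γ g, f⟫ : ℂ)‖ ^ 2 :=
    riesz_summable hB (fun s c => (hRiesz s c).2)
  obtain ⟨V, hV⟩ := analysis_exists (fun γ : Γ => π γ g) hgsum
  set Vad := ContinuousLinearMap.adjoint V with hVad
  set G : lp (fun _ : Γ => ℂ) 2 →L[ℂ] lp (fun _ : Γ => ℂ) 2 := V ∘L Vad with hGdef
  have hlow : ∀ c : lp (fun _ : Γ => ℂ) 2, A * ‖c‖ ^ 2 ≤ ‖Vad c‖ ^ 2 :=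
    adjoint_lower (fun s c => (hRiesz s c).1) V hV
  -- G is invertible
  have hGpos : ∀ c : lp (fun _ : Γ => ℂ) 2,
      ‖c‖ ^ 2 * (A.toNNReal : ℝ) ≤ ‖(⟪G c, c⟫ : ℂ)‖ := by
    intro c
    have h1 : (⟪G c, c⟫ : ℂ) = ((‖Vad c‖ : ℂ)) ^ 2 := by
      show (⟪V (Vad c), c⟫ : ℂ) = _
      rw [← ContinuousLinearMap.adjoint_inner_right, ← hVad,
        inner_self_eq_norm_sq_to_K]
      norm_num
    rw [h1]
    have h2 : ‖((‖Vad c‖ : ℂ)) ^ 2‖ = ‖Vad c‖ ^ 2 := by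
      rw [norm_pow, Complex.norm_real, norm_norm]
    rw [h2, Real.coe_toNNReal _ hA.le, mul_comm]
    exact hlow c
  have hGunit : IsUnit G :=
    ContinuousLinearMap.isUnit_of_forall_le_norm_inner_map G
      (c := A.toNNReal) (Real.toNNReal_pos.mpr hA) hGpos
  set u := hGunit.unit with hudef
  have hu : (u : lp (fun _ : Γ => ℂ) 2 →L[ℂ] lp (fun _ : Γ => ℂ) 2) = G := hGunit.unit_spec
  set Ginv : lp (fun _ : Γ => ℂ) 2 →L[ℂ] lp (fun _ : Γ => ℂ) 2 := ((u⁻¹ : (lp (fun _ : Γ => ℂ) 2 →L[ℂ] lp (fun _ : Γ => ℂ) 2)ˣ) : lp (fun _ : Γ => ℂ) 2 →L[ℂ] lp (fun _ : Γ => ℂ) 2) with hGinvdef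
  have hGinvG : ∀ c, Ginv (G c) = c := by
    intro c
    have h1 : Ginv * G = 1 := by rw [hGinvdef, ← hu]; exact u.inv_mul
    calc Ginv (G c) = (Ginv * G) c := rfl
      _ = c := by rw [h1]; rfl
  have hGGinv : ∀ c, G (Ginv c) = c := by
    intro c
    have h1 : G * Ginv = 1 := by rw [hGinvdef, ← hu]; exact u.mul_inv
    calc G (Ginv c) = (G * Ginv) c := rfl
      _ = c := by rw [h1]; rfl
  -- twist operators
  have twist : ∀ x : Γ, ∃ Λ : lp (fun _ : Γ => ℂ) 2 →L[ℂ] lp (fun _ : Γ => ℂ) 2,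
      ∀ c : lp (fun _ : Γ => ℂ) 2, ∀ γ : Γ,
        (Λ c : ∀ _ : Γ, ℂ) γ = σ x (x⁻¹ * γ) * c (x⁻¹ * γ) := by
    intro x
    obtain ⟨Λ, hΛ⟩ := twist_exists (Equiv.mulLeft x⁻¹) (fun γ => σ x (x⁻¹ * γ))
      (fun γ => hσnorm _ _)
    exact ⟨Λ, fun c γ => hΛ c γ⟩
  -- main step: every g' ∈ D is in the range of the commutant applied to g
  have hkey : ∀ g' ∈ D, T g' = 0 := by
    intro g' hg'
    have hsum' : ∀ f : H, Summable fun γ : Γ => ‖(⟪π γ g', f⟫ : ℂ)‖ ^ 2 := by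
      intro f
      have := hDsum f g' hg'
      refine this.congr fun γ => ?_
      rw [← norm_inner_symm]
    obtain ⟨W, hW⟩ := analysis_exists (fun γ : Γ => π γ g') hsum'
    set S : H →L[ℂ] H := (ContinuousLinearMap.adjoint W) ∘L (Ginv ∘L V) with hSdef
    have hGcomm : ∀ (x : Γ) (Λ : lp (fun _ : Γ => ℂ) 2 →L[ℂ] lp (fun _ : Γ => ℂ) 2),
        (∀ c : lp (fun _ : Γ => ℂ) 2, ∀ γ : Γ,
          (Λ c : ∀ _ : Γ, ℂ) γ = σ x (x⁻¹ * γ) * c (x⁻¹ * γ)) →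
        ∀ c, Ginv (Λ c) = Λ (Ginv c) := by
      intro x Λ hΛ c
      have lG : ∀ d, G (Λ d) = Λ (G d) := by
        intro d
        show V (Vad (Λ d)) = Λ (V (Vad d))
        rw [hVad, intertwine_right hmul g V hV x Λ hΛ d]
        exact intertwine_left hσnorm hmul g V hV x Λ hΛ _
      have h5 : Λ c = G (Λ (Ginv c)) := by rw [lG, hGGinv]
      rw [h5, hGinvG]
    have hS : ∀ (x : Γ) (f : H), S (π x f) = π x (S f) := by
      intro x f
      obtain ⟨Λ, hΛ⟩ := twist x
      have l1 : V (π x f) = Λ (V f) := intertwine_left hσnorm hmul g V hV x Λ hΛ f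
      calc S (π x f) = ContinuousLinearMap.adjoint W (Ginv (V (π x f))) := rfl
        _ = ContinuousLinearMap.adjoint W (Ginv (Λ (V f))) := by rw [l1]
        _ = ContinuousLinearMap.adjoint W (Λ (Ginv (V f))) := by
            rw [hGcomm x Λ hΛ (V f)]
        _ = π x (ContinuousLinearMap.adjoint W (Ginv (V f))) :=
            intertwine_right hmul g' W hW x Λ hΛ _
        _ = π x (S f) := rfl
    have hone : π (1 : Γ) g = g := by rw [hπone]; rfl
    have hSg : S g = g' := by
      have h1 : V g = G (lp.single 2 (1 : Γ) (1 : ℂ)) := by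
        show V g = V (Vad (lp.single 2 (1 : Γ) (1 : ℂ)))
        rw [hVad, adjoint_single (fun γ : Γ => π γ g) V hV, one_smul, hone]
      have h2 : Ginv (V g) = lp.single 2 (1 : Γ) (1 : ℂ) := by rw [h1, hGinvG]
      show ContinuousLinearMap.adjoint W (Ginv (V g)) = g'
      rw [h2, adjoint_single (fun γ : Γ => π γ g') W hW, one_smul, hπone]
      rfl
    have := hT S hS g
    rw [hSg, hTg, map_zero] at this
    exact this
  -- conclude by density
  have hclosed : IsClosed {f : H | T f = 0} := isClosed_eq T.continuous continuous_const
  have hsub : (D : Set H) ⊆ {f : H | T f = 0} := fun f hf => hkey f hf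
  have hall : ∀ f : H, T f = 0 := by
    intro f
    have h1 : closure (D : Set H) ⊆ {f : H | T f = 0} := closure_minimal hsub hclosed
    have h2 : f ∈ closure (D : Set H) := by rw [hD.closure_eq]; trivial
    exact h1 h2
  exact ContinuousLinearMap.ext fun f => by rw [hall f]; rfl


end AuxProof


theorem stmt_9
    {Γ : Type*} [Group Γ] [Countable Γ]
    {H : Type*} [NormedAddCommGroup H] [InnerProductSpace ℂ H] [CompleteSpace H]
    [TopologicalSpace.SeparableSpace H]
    (σ : Γ → Γ → ℂ) (π : Γ → H ≃ₗᵢ[ℂ] H)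
    (hrep : IsProjectiveRep σ π)
    (hsq : IsSquareIntegrableRep π)
    (hK : KleppnerCondition σ)
    (g : H) (hg : IsRieszSequence π g) :
    IsSeparatingVector π g := by
  intro T hT hTg
  obtain ⟨hσnorm, -, -, hπone, hmul⟩ := hrep
  exact aux_main σ π hσnorm hπone hmul hsq g hg T (fun S hS => hT S hS) hTg
end
end

section
/- Let G be a second countable unimodular locally compact group with Haar measure μ_G, let Γ ⊆ G be a lattice, and let (π, H) be a discrete series σ-representation of G of formal dimension d_π > 0. Suppose g ∈ H is a unit vector such that π(Γ)g is an orthonormal system in H (⟨π(γ)g, π(γ')g⟩ = δ_{γ,γ'}). Then the following are equivalent: (i) the closed linear span of {π(γ)g : γ ∈ Γ} equals H; (ii) vol(G/Γ)·d_π = 1. -/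
open MeasureTheory
open scoped ENNReal ComplexInnerProductSpace

noncomputable section

section AuxLemmas
open Submodule

instance auxCompleteClosure {E : Type*} [NormedAddCommGroup E] [InnerProductSpace ℂ E]
    [CompleteSpace E] (K : Submodule ℂ E) : CompleteSpace K.topologicalClosure :=
  (Submodule.isClosed_topologicalClosure K).completeSpace_coe

variable {E : Type*} [NormedAddCommGroup E] [InnerProductSpace ℂ E] [CompleteSpace E]

lemma aux_pythagoras {K : Submodule ℂ E} [CompleteSpace K] (u : E) :
    ‖u‖ ^ 2 = ‖(orthogonalProjection K u : E)‖ ^ 2 + ‖u - orthogonalProjection K u‖ ^ 2 := by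
  have hz : (u - orthogonalProjection K u : E) ∈ Kᗮ := sub_starProjection_mem_orthogonal u
  have h0 : ⟪(orthogonalProjection K u : E), u - orthogonalProjection K u⟫ = 0 :=
    inner_right_of_mem_orthogonal (orthogonalProjection K u).2 hz
  have h := norm_add_sq_eq_norm_sq_add_norm_sq_of_inner_eq_zero _ _ h0
  rw [add_sub_cancel] at h
  simpa [pow_two] using h

lemma aux_proj_norm_le {K : Submodule ℂ E} [CompleteSpace K] (u : E) :
    ‖(orthogonalProjection K u : E)‖ ≤ ‖u‖ := by
  have h := aux_pythagoras (K := K) u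
  have h2 : ‖(orthogonalProjection K u : E)‖ ^ 2 ≤ ‖u‖ ^ 2 := by
    nlinarith [sq_nonneg ‖u - orthogonalProjection K u‖]
  exact le_of_pow_le_pow_left₀ two_ne_zero (norm_nonneg _) h2

lemma aux_mem_of_sq_norm_proj_eq {K : Submodule ℂ E} [CompleteSpace K] (u : E)
    (h : ‖(orthogonalProjection K u : E)‖ ^ 2 = ‖u‖ ^ 2) : u ∈ K := by
  have hp := aux_pythagoras (K := K) u
  have h0 : ‖u - orthogonalProjection K u‖ ^ 2 = 0 := by linarith
  have h1 : u - orthogonalProjection K u = 0 := by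
    rw [pow_eq_zero_iff two_ne_zero, norm_eq_zero] at h0; exact h0
  have h2 : u = (orthogonalProjection K u : E) := by
    rw [sub_eq_zero] at h1; exact h1
  rw [h2]; exact (orthogonalProjection K u).2

lemma aux_parseval {ι : Type*} {v : ι → E} (hv : Orthonormal ℂ v) (u : E) :
    HasSum (fun i => ‖⟪u, v i⟫‖ ^ 2)
      (‖(orthogonalProjection (span ℂ (Set.range v)).topologicalClosure u : E)‖ ^ 2) := by
  have hmem : ∀ i, v i ∈ (span ℂ (Set.range v)).topologicalClosure := fun i =>
    le_topologicalClosure _ (subset_span (Set.mem_range_self i))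
  set e : ι → (span ℂ (Set.range v)).topologicalClosure := fun i => ⟨v i, hmem i⟩ with he_def
  have he : Orthonormal ℂ e := ⟨fun i => hv.1 i, fun i j h => hv.2 h⟩
  have hsp : ⊤ ≤ (span ℂ (Set.range e)).topologicalClosure := by
    intro x _
    have himg : ((span ℂ (Set.range v)).topologicalClosure.subtype) ''
        (span ℂ (Set.range e) : Set ((span ℂ (Set.range v)).topologicalClosure))
        = (span ℂ (Set.range v) : Set E) := by
      rw [← Submodule.map_coe, Submodule.map_span]
      congr 1
      rw [← Set.range_comp]
      rfl
    have hx : (x : E) ∈ closure (((span ℂ (Set.range v)).topologicalClosure.subtype) ''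
        (span ℂ (Set.range e) : Set ((span ℂ (Set.range v)).topologicalClosure))) := by
      rw [himg, ← Submodule.topologicalClosure_coe]
      exact x.2
    have hmem2 : x ∈ closure ((span ℂ (Set.range e) :
        Set ((span ℂ (Set.range v)).topologicalClosure))) := closure_subtype.mpr hx
    rwa [← Submodule.topologicalClosure_coe, SetLike.mem_coe] at hmem2
  set b : HilbertBasis ι ℂ (span ℂ (Set.range v)).topologicalClosure := HilbertBasis.mk he hsp
  set w := orthogonalProjection (span ℂ (Set.range v)).topologicalClosure u with hw
  have hinner : ∀ i, ⟪u, v i⟫ = ⟪(w : E), v i⟫ := by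
    intro i
    have h0 : ⟪u - (w : E), v i⟫ = 0 :=
      inner_left_of_mem_orthogonal (hmem i) (sub_starProjection_mem_orthogonal u)
    rw [inner_sub_left, sub_eq_zero] at h0
    exact h0
  have hs := b.hasSum_inner_mul_inner w w
  have hcoe : ∀ i, (⟪w, b i⟫ : ℂ) * ⟪b i, w⟫ = ((‖⟪u, v i⟫‖ ^ 2 : ℝ) : ℂ) := by
    intro i
    have hb : (b i : E) = v i := by rw [HilbertBasis.coe_mk]
    have h1 : (⟪w, b i⟫ : ℂ) = ⟪(w : E), v i⟫ := by rw [← hb]; rfl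
    have h2 : (⟪b i, w⟫ : ℂ) = ⟪(v i : E), (w : E)⟫ := by rw [← hb]; rfl
    rw [h1, h2, hinner i, ← inner_conj_symm ((w : E)) (v i), RCLike.conj_mul, RCLike.norm_conj]
    norm_cast
  have h3 : (⟪w, w⟫ : ℂ) = ((‖(w : E)‖ ^ 2 : ℝ) : ℂ) := by
    rw [inner_self_eq_norm_sq_to_K]
    norm_cast
  have hsum2 : HasSum (fun i => ((‖⟪u, v i⟫‖ ^ 2 : ℝ) : ℂ)) ((‖(w : E)‖ ^ 2 : ℝ) : ℂ) := by
    have h4 := hs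
    rw [show (fun i => (⟪w, b i⟫ : ℂ) * ⟪b i, w⟫) = fun i => ((‖⟪u, v i⟫‖ ^ 2 : ℝ) : ℂ)
      from funext hcoe] at h4
    rwa [h3] at h4
  exact Complex.hasSum_ofReal.mp hsum2

end AuxLemmas

theorem stmt_16
    {G : Type*} [Group G] [TopologicalSpace G] [IsTopologicalGroup G]
    [LocallyCompactSpace G] [SecondCountableTopology G]
    [MeasurableSpace G] [BorelSpace G]
    (μ : Measure G) [μ.IsHaarMeasure] [μ.IsMulRightInvariant]
    {H : Type*} [NormedAddCommGroup H] [InnerProductSpace ℂ H] [CompleteSpace H]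
    [TopologicalSpace.SeparableSpace H]
    (σ : G → G → ℂ) (π : G → H ≃ₗᵢ[ℂ] H)
    (hrep : IsProjectiveRep σ π)
    (hσ_meas : Measurable fun p : G × G => σ p.1 p.2)
    (hπ_meas : ∀ f g : H, Measurable fun x : G => ⟪π x f, g⟫)
    (hirr : ∀ K : Submodule ℂ H, IsClosed (K : Set H) →
      (∀ x : G, ∀ f ∈ K, π x f ∈ K) → K = ⊥ ∨ K = ⊤)
    (d : ℝ) (hd : 0 < d)
    (hortho : ∀ f₁ f₂ g₁ g₂ : H,
      ∫ x, ⟪π x f₁, g₁⟫ * (starRingEnd ℂ) ⟪π x f₂, g₂⟫ ∂μ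
        = (d : ℂ)⁻¹ * (⟪f₁, f₂⟫ * (starRingEnd ℂ) ⟪g₁, g₂⟫))
    (Γ : Subgroup G) [Countable Γ] [DiscreteTopology Γ]
    (Ω : Set G) (hΩ_meas : MeasurableSet Ω) (hΩ_fin : μ Ω < ∞)
    (hΩ_tile : ∀ x : G, ∃! γ : Γ, x * (γ : G)⁻¹ ∈ Ω)
    (g : H) (hg : ‖g‖ = 1)
    (hON : Orthonormal ℂ fun γ : Γ => π (γ : G) g) :
    IsCyclicVector (fun γ : Γ => π (γ : G)) g ↔ (μ Ω).toReal * d = 1 := by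
  classical
  obtain ⟨hσ_norm, hσ_cocycle, hσ_one, hπ_one, hπ_mul⟩ := hrep
  set v : Γ → H := fun γ => π (γ : G) g with hv_def
  set V : Submodule ℂ H := (Submodule.span ℂ (Set.range v)).topologicalClosure with hV_def
  -- measurability helper
  have hmeas : ∀ u f : H, Measurable fun y : G => ENNReal.ofReal (‖⟪f, π y u⟫‖ ^ 2) := by
    intro u f
    have h1 : Measurable fun y : G => ‖⟪f, π y u⟫‖ := by
      have h0 : (fun y : G => ‖⟪f, π y u⟫‖) = fun y : G => ‖⟪π y u, f⟫‖ :=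
        funext fun y => norm_inner_symm f (π y u)
      rw [h0]
      exact (hπ_meas u f).norm
    exact (h1.pow_const 2).ennreal_ofReal
  -- Step 1 : orthogonality integral
  have step1 : ∀ f : H, ∫⁻ y, ENNReal.ofReal (‖⟪f, π y g⟫‖ ^ 2) ∂μ
      = ENNReal.ofReal (d⁻¹ * ‖f‖ ^ 2) := by
    intro f
    by_cases hf : f = 0
    · simp [hf]
    have h := hortho g g f f
    have hL : ∀ x : G, ⟪π x g, f⟫ * (starRingEnd ℂ) ⟪π x g, f⟫
        = ((‖⟪f, π x g⟫‖ ^ 2 : ℝ) : ℂ) := by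
      intro x
      rw [RCLike.mul_conj, norm_inner_symm (π x g) f]
      norm_cast
    have hR : ((d : ℂ))⁻¹ * (⟪g, g⟫ * (starRingEnd ℂ) ⟪f, f⟫)
        = ((d⁻¹ * ‖f‖ ^ 2 : ℝ) : ℂ) := by
      rw [inner_self_eq_norm_sq_to_K, inner_self_eq_norm_sq_to_K, hg, map_pow,
        RCLike.conj_ofReal]
      push_cast
      ring_nf
      exact rfl
    simp_rw [hL] at h
    rw [hR] at h
    rw [show (∫ x : G, ((‖⟪f, π x g⟫‖ ^ 2 : ℝ) : ℂ) ∂μ)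
        = ((∫ x : G, ‖⟪f, π x g⟫‖ ^ 2 ∂μ : ℝ) : ℂ) from integral_ofReal] at h
    have hint_eq : ∫ y, ‖⟪f, π y g⟫‖ ^ 2 ∂μ = d⁻¹ * ‖f‖ ^ 2 := by exact_mod_cast h
    have hpos : 0 < d⁻¹ * ‖f‖ ^ 2 := by
      have : 0 < ‖f‖ := norm_pos_iff.mpr hf
      positivity
    have hint : Integrable (fun y => ‖⟪f, π y g⟫‖ ^ 2) μ := by
      by_contra hni
      rw [integral_undef hni] at hint_eq
      linarith
    rw [← ofReal_integral_eq_lintegral_ofReal hint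
      (Filter.Eventually.of_forall fun y => sq_nonneg _), hint_eq]
  -- Step 2 : tiling
  have step2 : ∀ f : H, ∫⁻ x in Ω, ∑' γ : Γ, ENNReal.ofReal (‖⟪f, π (x * (γ : G)) g⟫‖ ^ 2) ∂μ
      = ENNReal.ofReal (d⁻¹ * ‖f‖ ^ 2) := by
    intro f
    set h : G → ℝ≥0∞ := fun y => ENNReal.ofReal (‖⟪f, π y g⟫‖ ^ 2) with hh
    have hhm : Measurable h := hmeas g f
    have hS : ∀ γ : Γ, MeasurableSet ((fun y : G => y * (γ : G)⁻¹) ⁻¹' Ω) := fun γ =>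
      hΩ_meas.preimage (measurable_mul_const _)
    have hdecomp : ∀ y : G,
        ∑' γ : Γ, ((fun y : G => y * (γ : G)⁻¹) ⁻¹' Ω).indicator h y = h y := by
      intro y
      obtain ⟨γ₀, hγ₀, huniq⟩ := hΩ_tile y
      rw [tsum_eq_single γ₀ ?_]
      · exact Set.indicator_of_mem (show y ∈ (fun y : G => y * (γ₀ : G)⁻¹) ⁻¹' Ω from hγ₀) h
      · intro γ hγ
        exact Set.indicator_of_notMem (show y ∉ (fun y : G => y * (γ : G)⁻¹) ⁻¹' Ω from fun hmem => hγ (huniq γ hmem)) h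
    have e1 : ∫⁻ y, h y ∂μ
        = ∑' γ : Γ, ∫⁻ y, ((fun y : G => y * (γ : G)⁻¹) ⁻¹' Ω).indicator h y ∂μ := by
      rw [← lintegral_tsum fun γ => (hhm.indicator (hS γ)).aemeasurable]
      exact lintegral_congr fun y => (hdecomp y).symm
    have e2 : ∀ γ : Γ, ∫⁻ y in (fun y : G => y * (γ : G)⁻¹) ⁻¹' Ω, h y ∂μ
        = ∫⁻ x in Ω, h (x * (γ : G)) ∂μ := by
      intro γ
      have hmp : MeasurePreserving (fun x : G => x * (γ : G)) μ μ :=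
        measurePreserving_mul_right μ (γ : G)
      have hemb : MeasurableEmbedding (fun x : G => x * (γ : G)) :=
        (MeasurableEquiv.mulRight (γ : G)).measurableEmbedding
      have h3 := hmp.setLIntegral_comp_preimage_emb hemb h ((fun y : G => y * (γ : G)⁻¹) ⁻¹' Ω)
      have hset : (fun x : G => x * (γ : G)) ⁻¹' ((fun y : G => y * (γ : G)⁻¹) ⁻¹' Ω) = Ω := by
        ext x
        simp [mul_inv_cancel_right]
      rw [hset] at h3
      exact h3.symm
    have e3 : ∑' γ : Γ, ∫⁻ x in Ω, h (x * (γ : G)) ∂μ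
        = ∫⁻ x in Ω, ∑' γ : Γ, h (x * (γ : G)) ∂μ :=
      (lintegral_tsum (μ := μ.restrict Ω) (f := fun (γ : Γ) (x : G) => h (x * (γ : G)))
        (fun γ => ((hhm.comp (measurable_mul_const ((γ : G))))).aemeasurable)).symm
    calc ∫⁻ x in Ω, ∑' γ : Γ, ENNReal.ofReal (‖⟪f, π (x * (γ : G)) g⟫‖ ^ 2) ∂μ
        = ∑' γ : Γ, ∫⁻ x in Ω, h (x * (γ : G)) ∂μ := e3.symm
      _ = ∑' γ : Γ, ∫⁻ y, ((fun y : G => y * (γ : G)⁻¹) ⁻¹' Ω).indicator h y ∂μ := by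
          refine tsum_congr fun γ => ?_
          rw [lintegral_indicator (hS γ) h, e2 γ]
      _ = ∫⁻ y, h y ∂μ := e1.symm
      _ = ENNReal.ofReal (d⁻¹ * ‖f‖ ^ 2) := step1 f
  -- Step 3 : pointwise Parseval
  have hproj : ∀ (x : G) (f : H),
      (∑' γ : Γ, ENNReal.ofReal (‖⟪f, π (x * (γ : G)) g⟫‖ ^ 2))
        = ENNReal.ofReal (‖(Submodule.orthogonalProjection V ((π x).symm f) : H)‖ ^ 2) := by
    intro x f
    have hnorm : ∀ γ : Γ, ‖⟪f, π (x * (γ : G)) g⟫‖ = ‖⟪(π x).symm f, v γ⟫‖ := by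
      intro γ
      have h1 : ⟪(π x).symm f, v γ⟫ = ⟪f, π x (v γ)⟫ := by
        conv_rhs => rw [← (π x).apply_symm_apply f]
        rw [(π x).inner_map_map]
      rw [h1]
      simp only [hv_def]
      rw [hπ_mul x (γ : G) g, inner_smul_right, norm_mul, hσ_norm, one_mul]
    have hs := aux_parseval hON ((π x).symm f)
    calc (∑' γ : Γ, ENNReal.ofReal (‖⟪f, π (x * (γ : G)) g⟫‖ ^ 2))
        = ∑' γ : Γ, ENNReal.ofReal (‖⟪(π x).symm f, v γ⟫‖ ^ 2) := by
          refine tsum_congr fun γ => ?_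
          rw [hnorm γ]
      _ = ENNReal.ofReal (∑' γ : Γ, ‖⟪(π x).symm f, v γ⟫‖ ^ 2) :=
          (ENNReal.ofReal_tsum_of_nonneg (fun γ => sq_nonneg _) hs.summable).symm
      _ = ENNReal.ofReal (‖(Submodule.orthogonalProjection V ((π x).symm f) : H)‖ ^ 2) := by
          rw [hs.tsum_eq]
  have key : ∀ f : H,
      ∫⁻ x in Ω, ENNReal.ofReal (‖(Submodule.orthogonalProjection V ((π x).symm f) : H)‖ ^ 2) ∂μ
        = ENNReal.ofReal (d⁻¹ * ‖f‖ ^ 2) := by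
    intro f
    refine Eq.trans ?_ (step2 f)
    exact lintegral_congr fun x => (hproj x f).symm
  constructor
  · -- cyclic → volume formula
    intro hcyc
    have hVtop : V = ⊤ := Submodule.dense_iff_topologicalClosure_eq_top.mp hcyc
    have hPg : ∀ x : G, (Submodule.orthogonalProjection V ((π x).symm g) : H) = (π x).symm g := fun x =>
      Submodule.starProjection_eq_self_iff.mpr (by rw [hVtop]; trivial)
    have hkey := key g
    have hconst : ∫⁻ x in Ω,
        ENNReal.ofReal (‖(Submodule.orthogonalProjection V ((π x).symm g) : H)‖ ^ 2) ∂μ = μ Ω := by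
      have hone : ∀ x : G,
          ENNReal.ofReal (‖(Submodule.orthogonalProjection V ((π x).symm g) : H)‖ ^ 2) = 1 := by
        intro x
        rw [hPg x, LinearIsometryEquiv.norm_map, hg]
        simp
      calc ∫⁻ x in Ω, ENNReal.ofReal (‖(Submodule.orthogonalProjection V ((π x).symm g) : H)‖ ^ 2) ∂μ
          = ∫⁻ _ in Ω, (1 : ℝ≥0∞) ∂μ := lintegral_congr fun x => hone x
        _ = μ Ω := setLIntegral_one Ω
    rw [hconst, hg] at hkey
    rw [hkey, ENNReal.toReal_ofReal (by positivity)]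
    field_simp
  · -- volume formula → cyclic
    intro hvol
    have hμΩ : μ Ω = ENNReal.ofReal d⁻¹ := by
      have ht : (μ Ω).toReal = d⁻¹ := by
        field_simp
        linarith [hvol]
      rw [← ENNReal.ofReal_toReal hΩ_fin.ne, ht]
    haveI : Nonempty H := ⟨0⟩
    set fseq : ℕ → H := TopologicalSpace.denseSeq H with hfseq
    have hFmeas : ∀ u : H,
        Measurable fun x : G => ∑' γ : Γ, ENNReal.ofReal (‖⟪u, π (x * (γ : G)) g⟫‖ ^ 2) :=
      fun u => Measurable.ennreal_tsum fun γ => (hmeas g u).comp (measurable_mul_const ((γ : G)))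
    have haef : ∀ u : H, ∀ᵐ x ∂(μ.restrict Ω), ((π x).symm u) ∈ V := by
      intro u
      have hFle : ∀ x : G, (∑' γ : Γ, ENNReal.ofReal (‖⟪u, π (x * (γ : G)) g⟫‖ ^ 2))
          ≤ ENNReal.ofReal (‖u‖ ^ 2) := by
        intro x
        rw [hproj x u]
        apply ENNReal.ofReal_le_ofReal
        have h1 : ‖(Submodule.orthogonalProjection V ((π x).symm u) : H)‖ ≤ ‖(π x).symm u‖ :=
          aux_proj_norm_le _
        calc ‖(Submodule.orthogonalProjection V ((π x).symm u) : H)‖ ^ 2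
            ≤ ‖(π x).symm u‖ ^ 2 := by
              nlinarith [h1, norm_nonneg ((Submodule.orthogonalProjection V ((π x).symm u) : H)),
                norm_nonneg ((π x).symm u)]
          _ = ‖u‖ ^ 2 := by rw [LinearIsometryEquiv.norm_map]
      have hconst : ∫⁻ _ in Ω, ENNReal.ofReal (‖u‖ ^ 2) ∂μ = ENNReal.ofReal (d⁻¹ * ‖u‖ ^ 2) := by
        rw [setLIntegral_const, hμΩ, ← ENNReal.ofReal_mul (sq_nonneg _)]
        ring_nf
      have hzero : ∫⁻ x in Ω, (ENNReal.ofReal (‖u‖ ^ 2)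
          - ∑' γ : Γ, ENNReal.ofReal (‖⟪u, π (x * (γ : G)) g⟫‖ ^ 2)) ∂μ = 0 := by
        rw [lintegral_sub (hFmeas u) (by rw [step2 u]; exact ENNReal.ofReal_ne_top)
          (Filter.Eventually.of_forall hFle), step2 u, hconst, tsub_self]
      have hae0 := (lintegral_eq_zero_iff (measurable_const.sub (hFmeas u))).mp hzero
      filter_upwards [hae0] with x hx
      have hFeq : (∑' γ : Γ, ENNReal.ofReal (‖⟪u, π (x * (γ : G)) g⟫‖ ^ 2))
          = ENNReal.ofReal (‖u‖ ^ 2) :=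
        le_antisymm (hFle x) (tsub_eq_zero_iff_le.mp hx)
      rw [hproj x u] at hFeq
      have h2 : ‖(Submodule.orthogonalProjection V ((π x).symm u) : H)‖ ^ 2 = ‖(π x).symm u‖ ^ 2 := by
        rw [LinearIsometryEquiv.norm_map]
        exact (ENNReal.ofReal_eq_ofReal_iff (sq_nonneg _) (sq_nonneg _)).mp hFeq
      exact aux_mem_of_sq_norm_proj_eq _ h2
    have hae_all : ∀ᵐ x ∂(μ.restrict Ω), ∀ n : ℕ, ((π x).symm (fseq n)) ∈ V :=
      (ae_all_iff).mpr fun n => haef (fseq n)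
    have hne : μ.restrict Ω ≠ 0 := by
      intro hcontra
      rw [MeasureTheory.Measure.restrict_eq_zero, hμΩ, ENNReal.ofReal_eq_zero] at hcontra
      have hdpos : (0 : ℝ) < d⁻¹ := by positivity
      linarith
    haveI : (ae (μ.restrict Ω)).NeBot := ae_neBot.mpr hne
    obtain ⟨x, hx⟩ := hae_all.exists
    have hclosed : IsClosed (((π x).symm) ⁻¹' (V : Set H)) :=
      (Submodule.isClosed_topologicalClosure _).preimage (π x).symm.continuous
    have hsub : Set.range fseq ⊆ ((π x).symm) ⁻¹' (V : Set H) := by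
      rintro _ ⟨n, rfl⟩
      exact hx n
    have hall : ∀ u : H, (π x).symm u ∈ V := by
      intro u
      have hclos : closure (Set.range fseq) ⊆ ((π x).symm) ⁻¹' (V : Set H) :=
        closure_minimal hsub hclosed
      have hdr : Dense (Set.range fseq) := TopologicalSpace.denseRange_denseSeq H
      have : u ∈ closure (Set.range fseq) := by
        rw [hdr.closure_eq]
        trivial
      exact hclos this
    have hVtop : V = ⊤ := by
      rw [Submodule.eq_top_iff']
      intro w
      have hw := hall (π x w)
      rwa [(π x).symm_apply_apply] at hw
    exact Submodule.dense_iff_topologicalClosure_eq_top.mpr hVtop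
end
end

section
/- Let (π, H) be a square-integrable σ-representation of a countable discrete group Γ on a separable complex Hilbert space H. Let (g_k)_{k∈I} be a countable family of unit vectors in H satisfying the simultaneous orthogonality conditions: for k ≠ j, ⟨π(γ)g_k, π(γ')g_j⟩ = 0 for all γ, γ' ∈ Γ, and ⟨S g_k, T g_j⟩ = 0 for all S, T ∈ π(Γ)'. Let a = (a_k)_{k∈I} be absolutely summable with a_k ≠ 0 for all k, and set g := Σ_{k∈I} a_k g_k. Then the closed linear span [π(Γ)g] of {π(γ)g : γ ∈ Γ} equals the orthogonal direct sum ⊕_{k∈I} [π(Γ)g_k], and the closed linear span [π(Γ)'g] of {Tg : T ∈ π(Γ)'} equals the orthogonal direct sum ⊕_{k∈I} [π(Γ)'g_k]. -/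
open MeasureTheory
open scoped ENNReal ComplexInnerProductSpace

noncomputable section

section Aux

variable {H : Type*} [NormedAddCommGroup H] [InnerProductSpace ℂ H]

lemma aux_mem_closure {K : Submodule ℂ H} {w : H} (h : w ∈ K.topologicalClosure) :
    w ∈ closure (K : Set H) := by
  rw [← Submodule.topologicalClosure_coe]; exact h

lemma aux_span_stable {T : H →L[ℂ] H} {X : Set H}
    (h : ∀ x ∈ X, T x ∈ Submodule.span ℂ X) :
    ∀ u ∈ Submodule.span ℂ X, T u ∈ Submodule.span ℂ X := by
  intro u hu
  induction hu using Submodule.span_induction with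
  | mem x hx => exact h x hx
  | zero => simp
  | add x y _ _ hx hy => rw [map_add]; exact Submodule.add_mem _ hx hy
  | smul c x _ hx => rw [T.map_smul]; exact Submodule.smul_mem _ c hx

lemma aux_closure_stable {T : H →L[ℂ] H} {X : Set H}
    (h : ∀ x ∈ X, T x ∈ Submodule.span ℂ X) {v : H}
    (hv : v ∈ (Submodule.span ℂ X).topologicalClosure) :
    T v ∈ (Submodule.span ℂ X).topologicalClosure := by
  have hv' := aux_mem_closure hv
  have h2 := map_mem_closure T.continuous hv' (aux_span_stable h)
  rw [← Submodule.topologicalClosure_coe] at h2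
  exact h2

lemma aux_hasSum_mem {ι : Type*} {V : Submodule ℂ H} (hV : IsClosed (V : Set H))
    {f : ι → H} {x : H} (hf : ∀ i, f i ∈ V) (h : HasSum f x) : x ∈ V :=
  hV.mem_of_tendsto h (Filter.Eventually.of_forall fun s => V.sum_mem fun i _ => hf i)

lemma aux_orth_sum_zero {ι : Type*} {w : ι → H}
    (horth : ∀ k j : ι, k ≠ j → ⟪w k, w j⟫ = 0)
    (hsum : HasSum w 0) (k : ι) : w k = 0 := by
  classical
  have h1 : HasSum (fun j => ⟪w k, w j⟫) ⟪w k, (0 : H)⟫ :=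
    hsum.mapL (innerSL ℂ (w k))
  have h2 : HasSum (fun j => ⟪w k, w j⟫) ⟪w k, w k⟫ := by
    have he : (fun j => ⟪w k, w j⟫) = fun j => if j = k then ⟪w k, w k⟫ else 0 := by
      funext j
      by_cases hj : j = k
      · subst hj; simp
      · simp [hj, horth k j fun h => hj h.symm]
    rw [he]
    exact hasSum_ite_eq k _
  have h3 := h2.unique h1
  rw [inner_zero_right] at h3
  exact inner_self_eq_zero.mp h3

lemma aux_inner_closure_zero {X Y : Set H}
    (h : ∀ x ∈ X, ∀ y ∈ Y, ⟪x, y⟫ = 0) {u v : H}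
    (hu : u ∈ (Submodule.span ℂ X).topologicalClosure)
    (hv : v ∈ (Submodule.span ℂ Y).topologicalClosure) : ⟪u, v⟫ = 0 := by
  have h1 : ∀ x ∈ Submodule.span ℂ X, ∀ y ∈ Submodule.span ℂ Y, ⟪x, y⟫ = 0 := by
    intro x hx
    induction hx using Submodule.span_induction with
    | mem x hx =>
      intro y hy
      induction hy using Submodule.span_induction with
      | mem y hy => exact h _ hx _ hy
      | zero => simp
      | add y z _ _ hy hz => rw [inner_add_right, hy, hz, add_zero]
      | smul c y _ hy => rw [inner_smul_right, hy, mul_zero]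
    | zero => intro y _; simp
    | add x z _ _ hx hz => intro y hy; rw [inner_add_left, hx _ hy, hz _ hy, add_zero]
    | smul c x _ hx => intro y hy; rw [inner_smul_left, hx _ hy, mul_zero]
  have h2 : ∀ y ∈ Submodule.span ℂ Y, ⟪u, y⟫ = 0 := by
    intro y hy
    have hEq : Set.EqOn (fun w : H => ⟪w, y⟫) (fun _ => (0 : ℂ))
        (closure ((Submodule.span ℂ X : Submodule ℂ H) : Set H)) :=
      Set.EqOn.closure (fun x hx => h1 x hx y hy)
        (Continuous.inner continuous_id continuous_const) continuous_const
    exact hEq (aux_mem_closure hu)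
  have hEq2 : Set.EqOn (fun w : H => ⟪u, w⟫) (fun _ => (0 : ℂ))
      (closure ((Submodule.span ℂ Y : Submodule ℂ H) : Set H)) :=
    Set.EqOn.closure (fun y hy => h2 y hy)
      (Continuous.inner continuous_const continuous_id) continuous_const
  exact hEq2 (aux_mem_closure hv)

lemma aux_proj_comm_equiv {K : Submodule ℂ H} [Submodule.HasOrthogonalProjection K] (e : H ≃ₗᵢ[ℂ] H)
    (hT : ∀ v ∈ K, e v ∈ K) (hS : ∀ v ∈ K, e.symm v ∈ K) (f : H) :
    (Submodule.orthogonalProjection K (e f) : H) = e (Submodule.orthogonalProjection K f) := by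
  apply Submodule.eq_starProjection_of_mem_of_inner_eq_zero (hT _ (Submodule.orthogonalProjection K f).2)
  intro w hw
  rw [← map_sub]
  have hy : ⟪e (f - ↑(Submodule.orthogonalProjection K f)), w⟫
      = ⟪f - ↑(Submodule.orthogonalProjection K f), e.symm w⟫ := by
    conv_lhs => rw [← e.apply_symm_apply w]
    exact e.inner_map_map _ _
  rw [hy]
  exact (Submodule.mem_orthogonal' _ _).mp (Submodule.sub_starProjection_mem_orthogonal f)
    _ (hS w hw)

lemma aux_proj_comm_clm [CompleteSpace H] {K : Submodule ℂ H} [Submodule.HasOrthogonalProjection K]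
    (T : H →L[ℂ] H) (hT : ∀ v ∈ K, T v ∈ K)
    (hS : ∀ v ∈ K, ContinuousLinearMap.adjoint T v ∈ K) (f : H) :
    (Submodule.orthogonalProjection K (T f) : H) = T (Submodule.orthogonalProjection K f) := by
  apply Submodule.eq_starProjection_of_mem_of_inner_eq_zero (hT _ (Submodule.orthogonalProjection K f).2)
  intro w hw
  rw [← map_sub, ← ContinuousLinearMap.adjoint_inner_right]
  exact (Submodule.mem_orthogonal' _ _).mp (Submodule.sub_starProjection_mem_orthogonal f)
    _ (hS w hw)

variable {Γ : Type*} [Group Γ]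

lemma aux_sigma_ne {σ : Γ → Γ → ℂ} {π : Γ → H ≃ₗᵢ[ℂ] H}
    (hrep : IsProjectiveRep σ π) (x y : Γ) : σ x y ≠ 0 := fun h => by
  have := hrep.1 x y
  rw [h] at this
  simpa using this

lemma aux_orbit_inv {σ : Γ → Γ → ℂ} {π : Γ → H ≃ₗᵢ[ℂ] H}
    (hrep : IsProjectiveRep σ π) (g : H) (γ : Γ) {v : H}
    (hv : v ∈ (Submodule.span ℂ (Set.range fun γ : Γ => π γ g)).topologicalClosure) :
    π γ v ∈ (Submodule.span ℂ (Set.range fun γ : Γ => π γ g)).topologicalClosure := by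
  have h := aux_closure_stable
    (T := ((π γ).toContinuousLinearEquiv : H →L[ℂ] H)) (X := Set.range fun γ : Γ => π γ g)
    ?_ hv
  · simpa using h
  · rintro x ⟨γ', rfl⟩
    have hx : π γ (π γ' g) = σ γ γ' • π (γ * γ') g := hrep.2.2.2.2 γ γ' g
    simp only [ContinuousLinearEquiv.coe_coe, LinearIsometryEquiv.coe_toContinuousLinearEquiv]
    rw [hx]
    exact Submodule.smul_mem _ _ (Submodule.subset_span ⟨γ * γ', rfl⟩)

lemma aux_orbit_inv_symm {σ : Γ → Γ → ℂ} {π : Γ → H ≃ₗᵢ[ℂ] H}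
    (hrep : IsProjectiveRep σ π) (g : H) (γ : Γ) {v : H}
    (hv : v ∈ (Submodule.span ℂ (Set.range fun γ : Γ => π γ g)).topologicalClosure) :
    (π γ).symm v ∈ (Submodule.span ℂ (Set.range fun γ : Γ => π γ g)).topologicalClosure := by
  have h1 := aux_orbit_inv hrep g γ⁻¹ hv
  have h2 : (π γ).symm v = (σ γ⁻¹ γ)⁻¹ • π γ⁻¹ v := by
    have h3 : π γ⁻¹ (π γ ((π γ).symm v)) = σ γ⁻¹ γ • π (γ⁻¹ * γ) ((π γ).symm v) :=
      hrep.2.2.2.2 γ⁻¹ γ ((π γ).symm v)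
    rw [LinearIsometryEquiv.apply_symm_apply, inv_mul_cancel, hrep.2.2.2.1] at h3
    simp only [LinearIsometryEquiv.coe_refl, id_eq] at h3
    rw [h3, smul_smul, inv_mul_cancel₀ (aux_sigma_ne hrep γ⁻¹ γ), one_smul]
  rw [h2]
  exact Submodule.smul_mem _ _ h1

lemma aux_comm_symm {π : Γ → H ≃ₗᵢ[ℂ] H} {T : H →L[ℂ] H}
    (hT : T ∈ RepCommutant π) (γ : Γ) (v : H) :
    T ((π γ).symm v) = (π γ).symm (T v) := by
  have h := hT γ ((π γ).symm v)
  rw [LinearIsometryEquiv.apply_symm_apply] at h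
  rw [h, LinearIsometryEquiv.symm_apply_apply]

lemma aux_comm_adjoint [CompleteSpace H] {π : Γ → H ≃ₗᵢ[ℂ] H} {T : H →L[ℂ] H}
    (hT : T ∈ RepCommutant π) : ContinuousLinearMap.adjoint T ∈ RepCommutant π := by
  intro γ f
  apply ext_inner_left ℂ
  intro x
  rw [ContinuousLinearMap.adjoint_inner_right]
  calc ⟪T x, π γ f⟫ = ⟪π γ ((π γ).symm (T x)), π γ f⟫ := by
        rw [LinearIsometryEquiv.apply_symm_apply]
    _ = ⟪(π γ).symm (T x), f⟫ := (π γ).inner_map_map _ _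
    _ = ⟪T ((π γ).symm x), f⟫ := by rw [aux_comm_symm hT]
    _ = ⟪(π γ).symm x, ContinuousLinearMap.adjoint T f⟫ :=
        (ContinuousLinearMap.adjoint_inner_right _ _ _).symm
    _ = ⟪π γ ((π γ).symm x), π γ (ContinuousLinearMap.adjoint T f)⟫ :=
        ((π γ).inner_map_map _ _).symm
    _ = ⟪x, π γ (ContinuousLinearMap.adjoint T f)⟫ := by
        rw [LinearIsometryEquiv.apply_symm_apply]

end Aux

theorem stmt_18
    {Γ : Type*} [Group Γ] [Countable Γ]
    {H : Type*} [NormedAddCommGroup H] [InnerProductSpace ℂ H] [CompleteSpace H]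
    [TopologicalSpace.SeparableSpace H]
    (σ : Γ → Γ → ℂ) (π : Γ → H ≃ₗᵢ[ℂ] H)
    (hrep : IsProjectiveRep σ π)
    (hsq : IsSquareIntegrableRep π)
    {I : Type*} [Countable I] (g : I → H) (hnorm : ∀ k : I, ‖g k‖ = 1)
    (horthπ : ∀ k j : I, k ≠ j → ∀ γ γ' : Γ, ⟪π γ (g k), π γ' (g j)⟫ = 0)
    (horthcom : ∀ k j : I, k ≠ j → ∀ S ∈ RepCommutant π, ∀ T ∈ RepCommutant π,
      ⟪S (g k), T (g j)⟫ = 0)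
    (a : I → ℂ) (ha_sum : Summable fun k : I => ‖a k‖) (ha_ne : ∀ k : I, a k ≠ 0)
    (g₀ : H) (hg₀ : HasSum (fun k : I => a k • g k) g₀) :
    (Submodule.span ℂ (Set.range fun γ : Γ => π γ g₀)).topologicalClosure
      = (⨆ k : I,
          (Submodule.span ℂ (Set.range fun γ : Γ => π γ (g k))).topologicalClosure).topologicalClosure ∧
    (Submodule.span ℂ {v : H | ∃ T ∈ RepCommutant π, T g₀ = v}).topologicalClosure
      = (⨆ k : I,
          (Submodule.span ℂ {v : H | ∃ T ∈ RepCommutant π, T (g k) = v}).topologicalClosure).topologicalClosure := by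
  have hπ1 : π (1 : Γ) = LinearIsometryEquiv.refl ℂ H := hrep.2.2.2.1
  -- basics about the commutant
  have hone : (1 : H →L[ℂ] H) ∈ RepCommutant π := fun γ f => rfl
  have hcomp : ∀ S ∈ RepCommutant π, ∀ T ∈ RepCommutant π, S.comp T ∈ RepCommutant π := by
    intro S hS T hT γ f
    simp only [ContinuousLinearMap.comp_apply, hT γ f, hS γ (T f)]
  -- orbit closures of the g k, and their projections (in the commutant)
  set M : I → Submodule ℂ H :=
    fun k => (Submodule.span ℂ (Set.range fun γ : Γ => π γ (g k))).topologicalClosure with hM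
  have hMclosed : ∀ k, IsClosed ((M k : Submodule ℂ H) : Set H) :=
    fun k => Submodule.isClosed_topologicalClosure _
  haveI : ∀ k, Submodule.HasOrthogonalProjection (M k) := by
    intro k
    haveI : CompleteSpace (M k) := (hMclosed k).completeSpace_coe
    infer_instance
  have hgM : ∀ k, g k ∈ M k := by
    intro k
    have h1 : π (1 : Γ) (g k) ∈ M k :=
      Submodule.le_topologicalClosure _ (Submodule.subset_span ⟨1, rfl⟩)
    rw [hπ1] at h1
    simpa using h1
  -- Part 1
  have part1 : (Submodule.span ℂ (Set.range fun γ : Γ => π γ g₀)).topologicalClosure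
      = (⨆ k : I, M k).topologicalClosure := by
    set K := (Submodule.span ℂ (Set.range fun γ : Γ => π γ g₀)).topologicalClosure with hKdef
    have hKclosed : IsClosed ((K : Submodule ℂ H) : Set H) :=
      Submodule.isClosed_topologicalClosure _
    haveI : Submodule.HasOrthogonalProjection K := by
      haveI : CompleteSpace K := hKclosed.completeSpace_coe
      infer_instance
    set P : H →L[ℂ] H := K.subtypeL.comp (Submodule.orthogonalProjection K) with hPdef
    have hPapp : ∀ x : H, P x = (Submodule.orthogonalProjection K x : H) := fun x => rfl
    have hg₀K : g₀ ∈ K := by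
      have h1 : π (1 : Γ) g₀ ∈ K :=
        Submodule.le_topologicalClosure _ (Submodule.subset_span ⟨1, rfl⟩)
      rw [hπ1] at h1
      simpa using h1
    have hPg₀ : P g₀ = g₀ := (Submodule.starProjection_eq_self_iff (K := K)).mpr hg₀K
    have hPcomm : P ∈ RepCommutant π := by
      intro γ f
      exact aux_proj_comm_equiv (π γ) (fun v hv => aux_orbit_inv hrep g₀ γ hv)
        (fun v hv => aux_orbit_inv_symm hrep g₀ γ hv) f
    have hDcomm : P - 1 ∈ RepCommutant π := by
      intro γ f
      simp only [ContinuousLinearMap.sub_apply, ContinuousLinearMap.one_apply,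
        hPcomm γ f, map_sub]
    have hsum0 : HasSum (fun j : I => a j • ((P - 1) (g j))) 0 := by
      have h := hg₀.mapL (P - 1)
      simp only [_root_.map_smul] at h
      have hz : (P - 1) g₀ = 0 := by
        simp [ContinuousLinearMap.sub_apply, hPg₀]
      rwa [hz] at h
    have horthw : ∀ k j : I, k ≠ j →
        ⟪a k • (P - 1) (g k), a j • (P - 1) (g j)⟫ = 0 := by
      intro k j hkj
      rw [inner_smul_left, inner_smul_right,
        horthcom k j hkj _ hDcomm _ hDcomm, mul_zero, mul_zero]
    have hgK : ∀ k, g k ∈ K := by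
      intro k
      have h0 : a k • (P - 1) (g k) = 0 := aux_orth_sum_zero horthw hsum0 k
      have h1 : (P - 1) (g k) = 0 := by
        rcases smul_eq_zero.mp h0 with h | h
        · exact absurd h (ha_ne k)
        · exact h
      have h2 : P (g k) = g k := by
        have := h1
        simpa [ContinuousLinearMap.sub_apply, sub_eq_zero] using this
      rw [hPapp] at h2
      exact (Submodule.starProjection_eq_self_iff (K := K)).mp h2
    apply le_antisymm
    · -- K ≤ RHS
      apply Submodule.topologicalClosure_minimal
      · rw [Submodule.span_le]
        rintro x ⟨γ, rfl⟩
        have hsum : HasSum (fun j : I => a j • π γ (g j)) (π γ g₀) := by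
          have h := hg₀.mapL ((π γ).toContinuousLinearEquiv : H →L[ℂ] H)
          simpa [_root_.map_smul] using h
        refine aux_hasSum_mem (Submodule.isClosed_topologicalClosure _) ?_ hsum
        intro j
        refine Submodule.smul_mem _ _ ?_
        refine Submodule.le_topologicalClosure _ ?_
        exact le_iSup M j (aux_orbit_inv hrep (g j) γ (hgM j))
      · exact Submodule.isClosed_topologicalClosure _
    · -- RHS ≤ K
      refine Submodule.topologicalClosure_minimal _ ?_ hKclosed
      apply iSup_le
      intro k
      refine Submodule.topologicalClosure_minimal _ ?_ hKclosed
      rw [Submodule.span_le]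
      rintro x ⟨γ, rfl⟩
      exact aux_orbit_inv hrep g₀ γ (hgK k)
  -- Part 2
  have part2 : (Submodule.span ℂ {v : H | ∃ T ∈ RepCommutant π, T g₀ = v}).topologicalClosure
      = (⨆ k : I,
          (Submodule.span ℂ {v : H | ∃ T ∈ RepCommutant π, T (g k) = v}).topologicalClosure).topologicalClosure := by
    set N := (Submodule.span ℂ {v : H | ∃ T ∈ RepCommutant π, T g₀ = v}).topologicalClosure
      with hNdef
    have hNclosed : IsClosed ((N : Submodule ℂ H) : Set H) :=
      Submodule.isClosed_topologicalClosure _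
    haveI : Submodule.HasOrthogonalProjection N := by
      haveI : CompleteSpace N := hNclosed.completeSpace_coe
      infer_instance
    have hNinv : ∀ T ∈ RepCommutant π, ∀ v ∈ N, T v ∈ N := by
      intro T hT v hv
      refine aux_closure_stable ?_ hv
      rintro x ⟨S, hS, rfl⟩
      refine Submodule.subset_span ⟨T.comp S, hcomp T hT S hS, rfl⟩
    set R : H →L[ℂ] H := N.subtypeL.comp (Submodule.orthogonalProjection N) with hRdef
    have hRapp : ∀ x : H, R x = (Submodule.orthogonalProjection N x : H) := fun x => rfl
    have hg₀N : g₀ ∈ N :=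
      Submodule.le_topologicalClosure _ (Submodule.subset_span ⟨1, hone, rfl⟩)
    have hRg₀ : R g₀ = g₀ := (Submodule.starProjection_eq_self_iff (K := N)).mpr hg₀N
    have hRcomm : ∀ T ∈ RepCommutant π, ∀ f : H, R (T f) = T (R f) := by
      intro T hT f
      exact aux_proj_comm_clm T (hNinv T hT)
        (hNinv (ContinuousLinearMap.adjoint T) (aux_comm_adjoint hT)) f
    -- the projections onto the orbit closures M k are in the commutant
    have hQ : ∀ k : I, ∃ Q : H →L[ℂ] H, Q ∈ RepCommutant π ∧
        (∀ x : H, Q x ∈ M k) ∧ Q (g k) = g k := by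
      intro k
      refine ⟨(M k).subtypeL.comp (Submodule.orthogonalProjection (M k)), ?_, ?_, ?_⟩
      · intro γ f
        exact aux_proj_comm_equiv (π γ) (fun v hv => aux_orbit_inv hrep (g k) γ hv)
          (fun v hv => aux_orbit_inv_symm hrep (g k) γ hv) f
      · intro x
        exact (Submodule.orthogonalProjection (M k) x).2
      · exact (Submodule.starProjection_eq_self_iff (K := M k)).mpr (hgM k)
    have hwM : ∀ k : I, (R - 1) (g k) ∈ M k := by
      intro k
      obtain ⟨Q, hQcomm, hQmem, hQg⟩ := hQ k
      have h1 : (R - 1) (g k) = Q ((R - 1) (g k)) := by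
        have h2 : R (Q (g k)) = Q (R (g k)) := hRcomm Q hQcomm (g k)
        have h3 : Q ((R - 1) (g k)) = Q (R (g k)) - Q (g k) := by
          simp only [ContinuousLinearMap.sub_apply, ContinuousLinearMap.one_apply, map_sub]
        rw [h3, ← h2, hQg]
        simp only [ContinuousLinearMap.sub_apply, ContinuousLinearMap.one_apply]
      rw [h1]
      exact hQmem _
    have hsum0 : HasSum (fun j : I => a j • ((R - 1) (g j))) 0 := by
      have h := hg₀.mapL (R - 1)
      simp only [_root_.map_smul] at h
      have hz : (R - 1) g₀ = 0 := by
        simp [ContinuousLinearMap.sub_apply, hRg₀]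
      rwa [hz] at h
    have horthw : ∀ k j : I, k ≠ j →
        ⟪a k • (R - 1) (g k), a j • (R - 1) (g j)⟫ = 0 := by
      intro k j hkj
      rw [inner_smul_left, inner_smul_right]
      have h0 : ⟪(R - 1) (g k), (R - 1) (g j)⟫ = 0 := by
        refine aux_inner_closure_zero ?_ (hwM k) (hwM j)
        rintro x ⟨γ, rfl⟩ y ⟨γ', rfl⟩
        exact horthπ k j hkj γ γ'
      rw [h0, mul_zero, mul_zero]
    have hgN : ∀ k, g k ∈ N := by
      intro k
      have h0 : a k • (R - 1) (g k) = 0 := aux_orth_sum_zero horthw hsum0 k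
      have h1 : (R - 1) (g k) = 0 := by
        rcases smul_eq_zero.mp h0 with h | h
        · exact absurd h (ha_ne k)
        · exact h
      have h2 : R (g k) = g k := by
        simpa [ContinuousLinearMap.sub_apply, sub_eq_zero] using h1
      rw [hRapp] at h2
      exact (Submodule.starProjection_eq_self_iff (K := N)).mp h2
    apply le_antisymm
    · apply Submodule.topologicalClosure_minimal
      · rw [Submodule.span_le]
        rintro x ⟨T, hT, rfl⟩
        have hsum : HasSum (fun j : I => a j • T (g j)) (T g₀) := by
          have h := hg₀.mapL T
          simpa [_root_.map_smul] using h
        refine aux_hasSum_mem (Submodule.isClosed_topologicalClosure _) ?_ hsum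
        intro j
        refine Submodule.smul_mem _ _ ?_
        refine Submodule.le_topologicalClosure _ ?_
        refine le_iSup (fun k : I =>
          (Submodule.span ℂ {v : H | ∃ T ∈ RepCommutant π, T (g k) = v}).topologicalClosure) j ?_
        exact Submodule.le_topologicalClosure _ (Submodule.subset_span ⟨T, hT, rfl⟩)
      · exact Submodule.isClosed_topologicalClosure _
    · refine Submodule.topologicalClosure_minimal _ ?_ hNclosed
      apply iSup_le
      intro k
      refine Submodule.topologicalClosure_minimal _ ?_ hNclosed
      rw [Submodule.span_le]
      rintro x ⟨T, hT, rfl⟩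
      exact hNinv T hT _ (hgN k)
  exact ⟨part1, part2⟩
end
end
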